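/- arXiv:2205.09711 — 6 statements merged into one kernel-verified Lean document; each statement's English description precedes it below -/
import Mathlib

section
/- Let R, B, E be nonempty finite types and let ψ : R × B × E → ℂ be a unit vector (∑_{r,b,e} |ψ(r,b,e)|² = 1). Let λ : R → ℝ and μ : E → ℝ be nonnegative. Suppose the partial trace of |ψ⟩⟨ψ| over B is the product of the diagonal matrices with entries λ and μ, i.e. for all r, r', e, e': ∑_b ψ(r,b,e) · conj(ψ(r',b,e')) = λ(r)·μ(e) if r = r' and e = e', and 0 otherwise. Then there exists a family φ : R → E → (B → ℂ) such that ψ(r,b,e) = √(λ(r)·μ(e)) · φ(r)(e)(b) for all r, b, e, and the vectors φ(r)(e) with λ(r)·μ(e) ≠ 0 form an orthonormal family: for any such (r,e), (r',e'), ∑_b φ(r)(e)(b) · conj(φ(r')(e')(b)) equals 1 if (r,e) = (r',e') and 0 otherwise. -/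
open Matrix
open scoped ComplexConjugate

/-- **Decoupling implies Schmidt form.**
If the reduced state of a tripartite pure state `ψ` on `R × B × E` after tracing out `B`
is the product of diagonal states `λ` on `R` and `μ` on `E`, then `ψ` has the Schmidt form
`ψ(r,b,e) = √(λ r · μ e) · φ r e b` with `(φ r e)` an orthonormal family wherever
`λ r · μ e ≠ 0`. -/
theorem decoupling_schmidt_form
    (R B E : Type) [Fintype R] [Fintype B] [Fintype E]
    [DecidableEq R] [DecidableEq E]
    [Nonempty R] [Nonempty B] [Nonempty E]
    (ψ : R × B × E → ℂ)
    (hψ : ∑ r : R, ∑ b : B, ∑ e : E, ‖ψ (r, b, e)‖ ^ 2 = 1)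
    (lam : R → ℝ) (mu : E → ℝ)
    (hlam : ∀ r, 0 ≤ lam r) (hmu : ∀ e, 0 ≤ mu e)
    (hdec : ∀ r r' : R, ∀ e e' : E,
      ∑ b : B, ψ (r, b, e) * conj (ψ (r', b, e'))
        = if r = r' ∧ e = e' then ((lam r * mu e : ℝ) : ℂ) else 0) :
    ∃ φ : R → E → B → ℂ,
      (∀ r b e, ψ (r, b, e) = (Real.sqrt (lam r * mu e) : ℂ) * φ r e b) ∧
      (∀ r e r' e', lam r * mu e ≠ 0 → lam r' * mu e' ≠ 0 →
        ∑ b : B, φ r e b * conj (φ r' e' b)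
          = if (r, e) = (r', e') then (1 : ℂ) else 0) := by
  classical
  -- if lam r * mu e = 0 then ψ (r,b,e) = 0
  have hzero : ∀ r e, lam r * mu e = 0 → ∀ b, ψ (r, b, e) = 0 := by
    intro r e h0 b
    have h := hdec r r e e
    rw [if_pos ⟨rfl, rfl⟩, h0, Complex.ofReal_zero] at h
    have hsum : ∑ b : B, (‖ψ (r, b, e)‖ : ℂ) ^ 2 = 0 := by
      rw [← h]
      refine Finset.sum_congr rfl fun b _ => ?_
      rw [Complex.mul_conj]
      norm_cast
      exact Complex.sq_norm _
    have hsum' : ∑ b : B, ‖ψ (r, b, e)‖ ^ 2 = 0 := by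
      exact_mod_cast hsum
    have := (Finset.sum_eq_zero_iff_of_nonneg
      (fun b _ => sq_nonneg ‖ψ (r, b, e)‖)).1 hsum' b (Finset.mem_univ b)
    exact norm_eq_zero.1 ((pow_eq_zero_iff two_ne_zero).1 this)
  refine ⟨fun r e b => if lam r * mu e = 0 then 0 else ψ (r, b, e) / (Real.sqrt (lam r * mu e) : ℂ),
    ?_, ?_⟩
  · intro r b e
    by_cases h0 : lam r * mu e = 0
    · simp [h0, hzero r e h0 b]
    · have hs : (Real.sqrt (lam r * mu e) : ℂ) ≠ 0 := by
        simp only [ne_eq, Complex.ofReal_eq_zero]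
        exact Real.sqrt_ne_zero'.2 (lt_of_le_of_ne (mul_nonneg (hlam r) (hmu e)) (Ne.symm h0))
      simp only [if_neg h0]
      field_simp
  · intro r e r' e' h h'
    simp only [if_neg h, if_neg h']
    have hpos : 0 < lam r * mu e := lt_of_le_of_ne (mul_nonneg (hlam r) (hmu e)) (Ne.symm h)
    have hpos' : 0 < lam r' * mu e' := lt_of_le_of_ne (mul_nonneg (hlam r') (hmu e')) (Ne.symm h')
    have hs : (Real.sqrt (lam r * mu e) : ℂ) ≠ 0 := by
      simp [Real.sqrt_ne_zero'.2 hpos]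
    have hs' : (Real.sqrt (lam r' * mu e') : ℂ) ≠ 0 := by
      simp [Real.sqrt_ne_zero'.2 hpos']
    have hconj : ∀ b : B, ψ (r, b, e) / (Real.sqrt (lam r * mu e) : ℂ) *
        conj (ψ (r', b, e') / (Real.sqrt (lam r' * mu e') : ℂ))
        = (ψ (r, b, e) * conj (ψ (r', b, e'))) /
          ((Real.sqrt (lam r * mu e) : ℂ) * (Real.sqrt (lam r' * mu e') : ℂ)) := by
      intro b
      rw [map_div₀]
      simp only [Complex.conj_ofReal]
      field_simp
    rw [Finset.sum_congr rfl (fun b _ => hconj b), ← Finset.sum_div, hdec]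
    by_cases heq : (r, e) = (r', e')
    · cases heq
      rw [if_pos ⟨rfl, rfl⟩, if_pos rfl]
      rw [← Complex.ofReal_mul, Real.mul_self_sqrt (le_of_lt hpos)]
      exact div_self (by exact_mod_cast ne_of_gt hpos)
    · have hne : ¬(r = r' ∧ e = e') := by
        intro ⟨h1, h2⟩; exact heq (by rw [h1, h2])
      rw [if_neg hne, if_neg heq, zero_div]
end

section
/- Let R, B, E be nonempty finite types, ι : R ↪ B an injection, and ψ : R × B × E → ℂ a unit vector. Let λ : R → ℝ and μ : E → ℝ be nonnegative, and suppose that for all r, r', e, e': ∑_b ψ(r,b,e) · conj(ψ(r',b,e')) = λ(r)·μ(e) if r = r' and e = e', and 0 otherwise. Then for every e ∈ E with μ(e) ≠ 0 there exists a unitary matrix V ∈ U(B) (Matrix.unitaryGroup B ℂ) such that for all r ∈ R and b ∈ B: ∑_{b'} V(b, b') · ψ(r, b', e) = √(λ(r)·μ(e)) if b = ι(r), and 0 otherwise. In other words, after a projective measurement on B with outcome flagged by e, a local unitary correction V on B transforms the post-measurement state into the maximally correlated state ∑_r √(λ(r)) |r⟩_R |ι(r)⟩_B, so all entanglement between R and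 the input is recovered on RB. -/
open Matrix
open scoped ComplexConjugate InnerProductSpace

/-- **Decoupling implies perfect entanglement recovery** ('if' direction of the
decoupling theorem). If the reference `R` and environment `E` are decoupled
(`ρ_{RE} = ρ_R ⊗ ρ_E` with diagonal spectra `λ`, `μ`), then for every measurement
outcome `e` with `μ e ≠ 0` there is a unitary correction `V` on `B` mapping the
post-measurement state to the maximally correlated state `∑ r √(λ r) |r⟩|ι r⟩`. -/
theorem decoupling_entanglement_recovery
    (R B E : Type) [Fintype R] [Fintype B] [Fintype E]
    [DecidableEq R] [DecidableEq B] [DecidableEq E]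
    [Nonempty R] [Nonempty B] [Nonempty E]
    (ι : R ↪ B)
    (ψ : R × B × E → ℂ)
    (hψ : ∑ r : R, ∑ b : B, ∑ e : E, ‖ψ (r, b, e)‖ ^ 2 = 1)
    (lam : R → ℝ) (mu : E → ℝ)
    (hlam : ∀ r, 0 ≤ lam r) (hmu : ∀ e, 0 ≤ mu e)
    (hdec : ∀ r r' : R, ∀ e e' : E,
      ∑ b : B, ψ (r, b, e) * conj (ψ (r', b, e'))
        = if r = r' ∧ e = e' then ((lam r * mu e : ℝ) : ℂ) else 0) :
    ∀ e : E, mu e ≠ 0 →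
      ∃ V ∈ Matrix.unitaryGroup B ℂ,
        ∀ r : R, ∀ b : B,
          ∑ b' : B, V b b' * ψ (r, b', e)
            = if b = ι r then (Real.sqrt (lam r * mu e) : ℂ) else 0 := by
  intro e he
  classical
  have hmue : 0 < mu e := (hmu e).lt_of_ne (Ne.symm he)
  -- the post-measurement vectors
  set v : R → EuclideanSpace ℂ B :=
    fun r => (WithLp.equiv 2 (B → ℂ)).symm (fun b => ψ (r, b, e)) with hvdef
  have hvapp : ∀ r b', v r b' = ψ (r, b', e) := fun r b' => rfl
  have hinner : ∀ r r' : R, ⟪v r, v r'⟫_ℂ = if r = r' then ((lam r * mu e : ℝ) : ℂ) else 0 := by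
    intro r r'
    have h := hdec r' r e e
    have h1 : ⟪v r, v r'⟫_ℂ = ∑ b : B, ψ (r', b, e) * conj (ψ (r, b, e)) := by
      simp [PiLp.inner_apply, RCLike.inner_apply, hvapp, mul_comm]
    rw [h1, h]
    by_cases hrr : r = r' <;> simp [hrr, eq_comm]
  -- normalized vectors
  set u : R → EuclideanSpace ℂ B :=
    fun r => (((Real.sqrt (lam r * mu e) : ℝ) : ℂ))⁻¹ • v r with hudef
  have hSinner : ∀ r r', lam r ≠ 0 → lam r' ≠ 0 →
      ⟪u r, u r'⟫_ℂ = if r = r' then 1 else 0 := by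
    intro r r' hr hr'
    simp only [hudef, inner_smul_left, inner_smul_right, map_inv₀, Complex.conj_ofReal]
    rw [hinner r r']
    by_cases h : r = r'
    · subst h
      have hpos : 0 < lam r * mu e := mul_pos ((hlam r).lt_of_ne (Ne.symm hr)) hmue
      have hs : Real.sqrt (lam r * mu e) * Real.sqrt (lam r * mu e) = lam r * mu e :=
        Real.mul_self_sqrt hpos.le
      have hsne : Real.sqrt (lam r * mu e) ≠ 0 := by positivity
      simp only [if_pos rfl, eq_self_iff_true, if_true]
      rw [← Complex.ofReal_inv, ← Complex.ofReal_mul, ← Complex.ofReal_mul,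
        ← Complex.ofReal_one, Complex.ofReal_inj]
      rw [← mul_assoc, ← mul_inv, hs]
      exact inv_mul_cancel₀ hpos.ne'
    · simp [h]
  -- extend to an orthonormal basis indexed by B
  set S : Set B := ι '' {r | lam r ≠ 0} with hSdef
  set w : B → EuclideanSpace ℂ B :=
    fun x => if h : ∃ r, lam r ≠ 0 ∧ ι r = x then u h.choose else 0 with hwdef
  have hw : ∀ r, lam r ≠ 0 → w (ι r) = u r := by
    intro r hr
    have hex : ∃ r', lam r' ≠ 0 ∧ ι r' = ι r := ⟨r, hr, rfl⟩
    have hspec := hex.choose_spec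
    have hr' : hex.choose = r := ι.injective hspec.2
    simp only [hwdef, dif_pos hex, hr']
  have horth : Orthonormal ℂ (S.restrict w) := by
    rw [orthonormal_iff_ite]
    rintro ⟨x, r, hr, rfl⟩ ⟨y, r', hr', rfl⟩
    change ⟪w (ι r), w (ι r')⟫_ℂ = _
    rw [hw r hr, hw r' hr', hSinner r r' hr hr']
    by_cases h : r = r'
    · simp [h]
    · have : (⟨ι r, ⟨r, hr, rfl⟩⟩ : S) ≠ ⟨ι r', ⟨r', hr', rfl⟩⟩ := by
        simp [Subtype.ext_iff, ι.injective.eq_iff, h]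
      simp [h, this]
  obtain ⟨bas, hbas⟩ := horth.exists_orthonormalBasis_extension_of_card_eq
    (by simp [finrank_euclideanSpace])
  -- the correcting unitary
  set V : Matrix B B ℂ := fun x y => conj (bas x y) with hVdef
  have hVinner : ∀ x y : B, ∑ b' : B, conj (bas x b') * bas y b' = if x = y then 1 else 0 := by
    intro x y
    have h := bas.orthonormal
    rw [orthonormal_iff_ite] at h
    have := h x y
    simpa [PiLp.inner_apply, RCLike.inner_apply, mul_comm] using this
  refine ⟨V, ?_, ?_⟩
  · rw [Matrix.mem_unitaryGroup_iff]
    ext x y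
    simp only [Matrix.mul_apply, Matrix.one_apply, Matrix.star_apply, hVdef, Complex.star_def,
      Complex.conj_conj]
    change ∑ k, V x k * star (V y k) = _
    simpa [hVdef] using hVinner x y
  · intro r b
    by_cases hr : lam r = 0
    · -- all ψ (r, ·, e) vanish
      have h0 := hdec r r e e
      rw [if_pos ⟨rfl, rfl⟩, hr] at h0
      simp only [Complex.ofReal_mul, Complex.ofReal_zero, zero_mul] at h0
      have hz : ∀ b', ψ (r, b', e) = 0 := by
        have hsum : ∑ b : B, Complex.normSq (ψ (r, b, e)) = 0 := by
          have : ((∑ b : B, Complex.normSq (ψ (r, b, e)) : ℝ) : ℂ) = 0 := by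
            push_cast
            simpa [Complex.mul_conj] using h0
          exact_mod_cast this
        intro b'
        have := (Finset.sum_eq_zero_iff_of_nonneg
          (fun b _ => Complex.normSq_nonneg (ψ (r, b, e)))).mp hsum b' (Finset.mem_univ b')
        exact Complex.normSq_eq_zero.mp this
      simp [hz, hr]
    · have hpos : 0 < lam r * mu e := mul_pos ((hlam r).lt_of_ne (Ne.symm hr)) hmue
      have hsne : ((Real.sqrt (lam r * mu e) : ℝ) : ℂ) ≠ 0 := by
        simp only [ne_eq, Complex.ofReal_eq_zero]
        positivity
      have hbas' : bas (ι r) = u r := by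
        rw [← hw r hr]; exact hbas (ι r) ⟨r, hr, rfl⟩
      have hψu : ∀ b', ψ (r, b', e)
          = ((Real.sqrt (lam r * mu e) : ℝ) : ℂ) * bas (ι r) b' := by
        intro b'
        rw [hbas']
        have : u r b' = (((Real.sqrt (lam r * mu e) : ℝ) : ℂ))⁻¹ * ψ (r, b', e) := rfl
        rw [this, ← mul_assoc, mul_inv_cancel₀ hsne, one_mul]
      calc ∑ b' : B, V b b' * ψ (r, b', e)
          = ((Real.sqrt (lam r * mu e) : ℝ) : ℂ)
              * ∑ b' : B, conj (bas b b') * bas (ι r) b' := by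
            rw [Finset.mul_sum]
            refine Finset.sum_congr rfl fun b' _ => ?_
            rw [hψu b']
            simp only [hVdef]
            ring
        _ = if b = ι r then ((Real.sqrt (lam r * mu e) : ℝ) : ℂ) else 0 := by
            rw [hVinner b (ι r)]
            by_cases hb : b = ι r <;> simp [hb]
end

section
/- Let d ≥ 1 and let A : Matrix (Fin d) (Fin d) ℂ be any matrix. Then ∫ U, U · A · Uᴴ dμ_d = (trace(A) / d) • 1, where 1 is the d×d identity matrix. In particular, averaging any density matrix over the full unitary group yields the maximally mixed state (1/d) • 1. -/
open MeasureTheory Matrix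

noncomputable section

attribute [local instance] Matrix.normedAddCommGroup Matrix.normedSpace

local instance {d : ℕ} : MeasurableSpace (Matrix.unitaryGroup (Fin d) ℂ) := borel _

namespace HaarAvg

variable {d : ℕ}

instance : BorelSpace (Matrix.unitaryGroup (Fin d) ℂ) := ⟨rfl⟩

instance : IsTopologicalGroup (Matrix.unitaryGroup (Fin d) ℂ) where
  continuous_mul := by
    apply continuous_induced_rng.2
    exact ((continuous_subtype_val.comp continuous_fst).matrix_mul
      (continuous_subtype_val.comp continuous_snd))
  continuous_inv := by
    apply continuous_induced_rng.2
    show Continuous (fun U : Matrix.unitaryGroup (Fin d) ℂ => ((U⁻¹ : _) : Matrix (Fin d) (Fin d) ℂ))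
    have : (fun U : Matrix.unitaryGroup (Fin d) ℂ => ((U⁻¹ : _) : Matrix (Fin d) (Fin d) ℂ))
        = fun U : Matrix.unitaryGroup (Fin d) ℂ => (U : Matrix (Fin d) (Fin d) ℂ)ᴴ := by
      funext U
      simp [UnitaryGroup.inv_apply, Matrix.star_eq_conjTranspose]
    rw [this]
    exact continuous_subtype_val.matrix_conjTranspose

instance : CompactSpace (Matrix.unitaryGroup (Fin d) ℂ) := by
  have h : IsCompact ((Matrix.unitaryGroup (Fin d) ℂ : Submonoid _) : Set (Matrix (Fin d) (Fin d) ℂ)) := by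
    apply Metric.isCompact_of_isClosed_isBounded
    · have : ((Matrix.unitaryGroup (Fin d) ℂ : Submonoid _) : Set (Matrix (Fin d) (Fin d) ℂ))
          = (fun A : Matrix (Fin d) (Fin d) ℂ => A * Aᴴ) ⁻¹' {1} := by
        ext A
        simp [Matrix.mem_unitaryGroup_iff, Matrix.star_eq_conjTranspose, SetLike.mem_coe]
      rw [this]
      exact isClosed_singleton.preimage (continuous_id.matrix_mul continuous_id.matrix_conjTranspose)
    · apply Bornology.IsBounded.subset (Metric.isBounded_closedBall (x := (0:Matrix (Fin d) (Fin d) ℂ)) (r := 1))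
      intro A hA
      simp only [Metric.mem_closedBall, dist_zero_right]
      rw [Matrix.norm_le_iff zero_le_one]
      intro i j
      exact entry_norm_bound_of_unitary hA i j
  exact isCompact_iff_compactSpace.mp h

end HaarAvg

open HaarAvg

/-- Averaging `U A Uᴴ` over the Haar probability measure on the unitary group
yields the maximally mixed multiple of the identity, `(tr A / d) • 1`. -/
theorem haar_average_conjugation (d : ℕ) (hd : 1 ≤ d)
    (A : Matrix (Fin d) (Fin d) ℂ)
    (μ : Measure (Matrix.unitaryGroup (Fin d) ℂ))
    [μ.IsHaarMeasure] [IsProbabilityMeasure μ] :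
    ∫ U : Matrix.unitaryGroup (Fin d) ℂ,
        (U : Matrix (Fin d) (Fin d) ℂ) * A * (U : Matrix (Fin d) (Fin d) ℂ)ᴴ ∂μ
      = (A.trace / (d : ℂ)) • (1 : Matrix (Fin d) (Fin d) ℂ) := by
  have hd0 : (d : ℂ) ≠ 0 := Nat.cast_ne_zero.2 (by omega)
  set f : Matrix.unitaryGroup (Fin d) ℂ → Matrix (Fin d) (Fin d) ℂ :=
    fun U => (U : Matrix (Fin d) (Fin d) ℂ) * A * (U : Matrix (Fin d) (Fin d) ℂ)ᴴ with hf
  have hcont : Continuous f :=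
    (continuous_subtype_val.matrix_mul continuous_const).matrix_mul
      continuous_subtype_val.matrix_conjTranspose
  have hint : @Integrable _ _ SeminormedAddGroup.toContinuousENorm _ _ f μ :=
    hcont.integrable_of_hasCompactSupport (HasCompactSupport.of_compactSpace f)
  set M : Matrix (Fin d) (Fin d) ℂ := ∫ U, f U ∂μ with hM
  -- invariance
  have hinv : ∀ V : Matrix.unitaryGroup (Fin d) ℂ,
      (V : Matrix (Fin d) (Fin d) ℂ) * M * (V : Matrix (Fin d) (Fin d) ℂ)ᴴ = M := by
    intro V
    set L : Matrix (Fin d) (Fin d) ℂ →L[ℂ] Matrix (Fin d) (Fin d) ℂ :=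
      LinearMap.toContinuousLinearMap
        ((LinearMap.mulRight ℂ (V : Matrix (Fin d) (Fin d) ℂ)ᴴ).comp
          (LinearMap.mulLeft ℂ (V : Matrix (Fin d) (Fin d) ℂ))) with hL
    have h1 : (V : Matrix (Fin d) (Fin d) ℂ) * M * (V : Matrix (Fin d) (Fin d) ℂ)ᴴ = L M := rfl
    rw [h1]; refine Eq.trans (L.integral_comp_comm hint).symm ?_
    have h2 : ∀ U : Matrix.unitaryGroup (Fin d) ℂ, L (f U) = f (V * U) := by
      intro U
      show (V : Matrix (Fin d) (Fin d) ℂ) *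
          ((U : Matrix (Fin d) (Fin d) ℂ) * A * (U : Matrix (Fin d) (Fin d) ℂ)ᴴ) *
          (V : Matrix (Fin d) (Fin d) ℂ)ᴴ = f (V * U)
      simp only [hf, Submonoid.coe_mul, conjTranspose_mul, mul_assoc]
    refine Eq.trans (integral_congr_ae (Filter.Eventually.of_forall (fun U => h2 U))) ?_
    exact MeasureTheory.integral_mul_left_eq_self f V
  -- M commutes with every unitary
  have hcomm : ∀ V : Matrix.unitaryGroup (Fin d) ℂ,
      (V : Matrix (Fin d) (Fin d) ℂ) * M = M * (V : Matrix (Fin d) (Fin d) ℂ) := by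
    intro V
    have hsV : (V : Matrix (Fin d) (Fin d) ℂ)ᴴ * (V : Matrix (Fin d) (Fin d) ℂ) = 1 := by
      rw [← Matrix.star_eq_conjTranspose]
      exact Matrix.UnitaryGroup.star_mul_self V
    calc (V : Matrix (Fin d) (Fin d) ℂ) * M
        = (V : Matrix (Fin d) (Fin d) ℂ) * M *
            ((V : Matrix (Fin d) (Fin d) ℂ)ᴴ * (V : Matrix (Fin d) (Fin d) ℂ)) := by
          rw [hsV, mul_one]
      _ = ((V : Matrix (Fin d) (Fin d) ℂ) * M * (V : Matrix (Fin d) (Fin d) ℂ)ᴴ) *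
            (V : Matrix (Fin d) (Fin d) ℂ) := (mul_assoc _ _ _).symm
      _ = M * (V : Matrix (Fin d) (Fin d) ℂ) := by rw [hinv V]
  -- off-diagonal entries vanish
  have hoff : ∀ i j : Fin d, i ≠ j → M i j = 0 := by
    intro i j hij
    set v : Fin d → ℂ := fun m => if m = i then -1 else 1 with hv
    have hmem : Matrix.diagonal v ∈ Matrix.unitaryGroup (Fin d) ℂ := by
      rw [Matrix.mem_unitaryGroup_iff, Matrix.star_eq_conjTranspose,
        Matrix.diagonal_conjTranspose, Matrix.diagonal_mul_diagonal]
      ext a b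
      by_cases hab : a = b
      · subst hab
        by_cases h : a = i <;> simp [hv, h, Matrix.one_apply]
      · simp [Matrix.diagonal_apply_ne _ hab, Matrix.one_apply, hab]
    have h := hcomm ⟨Matrix.diagonal v, hmem⟩
    have h2 : (Matrix.diagonal v * M) i j = (M * Matrix.diagonal v) i j := by rw [h]
    rw [Matrix.diagonal_mul, Matrix.mul_diagonal] at h2
    have hvi : v i = -1 := by simp [hv]
    have hvj : v j = 1 := by simp [hv, (Ne.symm hij)]
    rw [hvi, hvj] at h2
    linear_combination (-(1:ℂ)/2) * h2
  -- diagonal entries are all equal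
  have hdiag : ∀ i j : Fin d, M i i = M j j := by
    intro i j
    set σ : Equiv.Perm (Fin d) := Equiv.swap i j with hσ
    set P : Matrix (Fin d) (Fin d) ℂ := Matrix.of (fun a b => if σ a = b then 1 else 0) with hP
    have hmem : P ∈ Matrix.unitaryGroup (Fin d) ℂ := by
      rw [Matrix.mem_unitaryGroup_iff]
      ext a b
      simp only [Matrix.mul_apply, hP, Matrix.star_apply, Matrix.of_apply,
        apply_ite (star : ℂ → ℂ), star_one, star_zero, Matrix.one_apply, ite_mul, one_mul,
        zero_mul]
      rw [Finset.sum_ite_eq (Finset.univ) (σ a) (fun c => if σ b = c then (1:ℂ) else 0)]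
      simp [EmbeddingLike.apply_eq_iff_eq, eq_comm]
    have h := hcomm ⟨P, hmem⟩
    have h2 : (P * M) i j = (M * P) i j := by rw [h]
    have hl : (P * M) i j = M j j := by
      simp only [Matrix.mul_apply, hP, Matrix.of_apply, ite_mul, one_mul, zero_mul]
      rw [Finset.sum_ite_eq (Finset.univ) (σ i) (fun c => M c j)]
      simp [hσ]
    have hr : (M * P) i j = M i i := by
      have hσσ : ∀ x, σ (σ x) = x := fun x => Equiv.swap_apply_self i j x
      have hPcj : ∀ c, P c j = if c = σ j then (1:ℂ) else 0 := by
        intro c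
        simp only [hP, Matrix.of_apply]
        by_cases h : σ c = j
        · have h' : c = σ j := by rw [← h, hσσ]
          simp [h, h', hσσ]
        · have h' : ¬ c = σ j := by
            intro hc; apply h; rw [hc, hσσ]
          simp [h, h', hσσ]
      simp only [Matrix.mul_apply, hPcj, mul_ite, mul_one, mul_zero]
      rw [Finset.sum_ite_eq' (Finset.univ) (σ j) (fun c => M i c)]
      simp [hσ]
    rw [hl, hr] at h2
    exact h2.symm
  -- trace of M equals trace of A
  have htr : M.trace = A.trace := by
    set L : Matrix (Fin d) (Fin d) ℂ →L[ℂ] ℂ :=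
      LinearMap.toContinuousLinearMap (Matrix.traceLinearMap (Fin d) ℂ ℂ) with hLt
    have h1 : M.trace = L M := rfl
    rw [h1]; refine Eq.trans (L.integral_comp_comm hint).symm ?_
    have h2 : ∀ U : Matrix.unitaryGroup (Fin d) ℂ, L (f U) = A.trace := by
      intro U
      show ((U : Matrix (Fin d) (Fin d) ℂ) * A * (U : Matrix (Fin d) (Fin d) ℂ)ᴴ).trace = A.trace
      rw [Matrix.trace_mul_cycle, ← Matrix.star_eq_conjTranspose,
        Matrix.UnitaryGroup.star_mul_self U, one_mul]
    refine Eq.trans (integral_congr_ae (Filter.Eventually.of_forall (fun U => h2 U))) ?_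
    simp
  -- conclude
  set i0 : Fin d := ⟨0, by omega⟩ with hi0
  set c : ℂ := M i0 i0 with hc
  have hMeq : M = c • (1 : Matrix (Fin d) (Fin d) ℂ) := by
    ext a b
    by_cases h : a = b
    · subst h
      simp [Matrix.smul_apply, Matrix.one_apply, hc, hdiag a i0]
    · simp [Matrix.smul_apply, Matrix.one_apply, h, hoff a b h]
  have htrM : M.trace = c * d := by
    rw [hMeq, Matrix.trace_smul, Matrix.trace_one]
    simp [smul_eq_mul]
  have hcval : c = A.trace / d := by
    field_simp
    rw [← htrM, htr]
  rw [hMeq, hcval]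
end
end

section
/- Let p : ℕ → ℝ be a probability distribution (p n ≥ 0 for all n and ∑' n, p n = 1) with ∑' n, p n · |log₂ (p n)| < ∞, and let H = −∑' n, p n · log₂ (p n) (with the convention 0·log₂ 0 = 0). Fix ε > 0. For K ∈ ℕ, let the ε-typical set be T(K, ε) = { x : Fin K → ℕ | |−(1/K) · ∑_{i < K} log₂ (p (x i)) − H| ≤ ε } (restricted to strings with p(x i) > 0 for all i). Then the probability of the typical set under the K-fold product distribution tends to 1: the net K ↦ ∑'_{x ∈ T(K,ε)} ∏_{i < K} p (x i) converges to 1 as K → ∞. -/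
set_option maxHeartbeats 1000000

open Filter MeasureTheory Set ProbabilityTheory
open scoped ENNReal NNReal Topology

noncomputable section

namespace AEP

/-- The measure on ℕ given by the distribution p. -/
def mu (p : ℕ → ℝ) : Measure ℕ := Measure.sum (fun n => ENNReal.ofReal (p n) • Measure.dirac n)

/-- The K-fold product measure. -/
def nu (μ : Measure ℕ) (K : ℕ) : Measure (Fin K → ℕ) := Measure.pi (fun _ => μ)

variable {p : ℕ → ℝ}

lemma mu_apply (s : Set ℕ) : mu p s = ∑' n, ENNReal.ofReal (p n) * s.indicator 1 n := by
  rw [mu, Measure.sum_apply _ (Set.to_countable s).measurableSet]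
  congr 1; ext n
  rw [Measure.smul_apply, Measure.dirac_apply, smul_eq_mul]

lemma mu_singleton (n : ℕ) : mu p {n} = ENNReal.ofReal (p n) := by
  rw [mu_apply, tsum_eq_single n]
  · simp
  · intro m hm; simp [Set.indicator_apply, hm]

lemma summable_p (hsum : ∑' n, p n = 1) : Summable p := by
  by_contra h
  exact one_ne_zero (hsum ▸ tsum_eq_zero_of_not_summable h)

lemma mu_isProb (hp : ∀ n, 0 ≤ p n) (hsum : ∑' n, p n = 1) :
    IsProbabilityMeasure (mu p) := by
  constructor
  rw [mu_apply]
  simp only [Set.indicator_univ, Pi.one_apply, mul_one]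
  rw [← ENNReal.ofReal_tsum_of_nonneg hp (summable_p hsum), hsum]
  simp

lemma integrable_mu (hp : ∀ n, 0 ≤ p n) {g : ℕ → ℝ}
    (hg : Summable fun n => p n * |g n|) : Integrable g (mu p) := by
  refine ⟨(measurable_of_countable g).aestronglyMeasurable, ?_⟩
  rw [HasFiniteIntegral, lintegral_countable']
  have : ∀ a : ℕ, ‖g a‖ₑ * mu p {a} = ENNReal.ofReal (p a * |g a|) := by
    intro a
    rw [mu_singleton, ENNReal.ofReal_mul (hp a), mul_comm]
    congr 1
    rw [Real.enorm_eq_ofReal_abs]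
  simp_rw [this]
  rw [← ENNReal.ofReal_tsum_of_nonneg (fun n => mul_nonneg (hp n) (abs_nonneg _)) hg]
  exact ENNReal.ofReal_lt_top

lemma integral_mu (hp : ∀ n, 0 ≤ p n) {g : ℕ → ℝ} (hg : Integrable g (mu p)) :
    ∫ n, g n ∂(mu p) = ∑' n, p n * g n := by
  rw [integral_countable' hg]
  congr 1; ext n
  rw [measureReal_def, mu_singleton, ENNReal.toReal_ofReal (hp n), smul_eq_mul]

section Product

variable {μ : Measure ℕ} [IsProbabilityMeasure μ] {K : ℕ}

instance : IsProbabilityMeasure (nu μ K) := by unfold nu; infer_instance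

lemma meas_all (s : Set (Fin K → ℕ)) : MeasurableSet s := (Set.to_countable s).measurableSet

lemma nu_cylinder (S : Finset (Fin K)) (B : Fin K → Set ℕ) :
    nu μ K (⋂ i ∈ S, (fun x => x i) ⁻¹' B i) = ∏ i ∈ S, μ (B i) := by
  classical
  have hset : (⋂ i ∈ S, (fun x : Fin K → ℕ => x i) ⁻¹' B i) =
      Set.pi Set.univ (fun i => if i ∈ S then B i else Set.univ) := by
    ext x
    simp only [Set.mem_iInter, Set.mem_preimage, Set.mem_pi, Set.mem_univ, true_implies]
    constructor
    · intro h i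
      by_cases hi : i ∈ S <;> simp [hi, h]
    · intro h i hi
      have := h i; simpa [hi] using this
  rw [hset, nu, Measure.pi_pi]
  rw [← Finset.prod_subset (Finset.subset_univ S)
    (f := fun i => μ (if i ∈ S then B i else Set.univ))]
  · exact Finset.prod_congr rfl (fun i hi => by simp [hi])
  · intro i _ hi; simp [hi, measure_univ]

lemma nu_eval_preimage (i : Fin K) (B : Set ℕ) :
    nu μ K ((fun x => x i) ⁻¹' B) = μ B := by
  have := nu_cylinder (μ := μ) {i} (fun _ => B)
  simpa using this

lemma map_eval (i : Fin K) : Measure.map (fun x : Fin K → ℕ => x i) (nu μ K) = μ :=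
  Measure.ext fun s _ => by
    rw [Measure.map_apply (measurable_of_countable _) (Set.to_countable s).measurableSet,
      nu_eval_preimage]

lemma integral_comp_eval (i : Fin K) (g : ℕ → ℝ) :
    ∫ x, g (x i) ∂(nu μ K) = ∫ n, g n ∂μ := by
  conv_rhs => rw [← map_eval (μ := μ) i]
  rw [integral_map (measurable_of_countable _).aemeasurable
    (measurable_of_countable g).aestronglyMeasurable]

lemma integrable_comp_eval {g : ℕ → ℝ} (hg : Integrable g μ) (i : Fin K) :
    Integrable (fun x => g (x i)) (nu μ K) := by
  have : Integrable g (Measure.map (fun x : Fin K → ℕ => x i) (nu μ K)) := by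
    rw [map_eval]; exact hg
  exact (integrable_map_measure (measurable_of_countable g).aestronglyMeasurable
    (measurable_of_countable _).aemeasurable).mp this

lemma indep_coords :
    iIndepFun (fun (i : Fin K) (x : Fin K → ℕ) => x i) (nu μ K) := by
  rw [iIndepFun_iff_measure_inter_preimage_eq_mul]
  intro S sets _
  rw [nu_cylinder S sets]
  exact Finset.prod_congr rfl fun i _ => (nu_eval_preimage i (sets i)).symm

lemma nu_set_eq_tsum (s : Set (Fin K → ℕ)) :
    nu μ K s = ∑' x : s, nu μ K {(x : Fin K → ℕ)} := by
  have := tsum_measure_preimage_singleton (μ := nu μ K) (Set.to_countable s)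
    (f := id) (fun b _ => meas_all _)
  simp only [Set.preimage_id] at this
  exact this.symm

end Product

lemma nu_singleton (hp : ∀ n, 0 ≤ p n) (hsum : ∑' n, p n = 1) {K : ℕ} (x : Fin K → ℕ) :
    nu (mu p) K {x} = ENNReal.ofReal (∏ i, p (x i)) := by
  haveI := mu_isProb hp hsum
  have : ({x} : Set (Fin K → ℕ)) = Set.pi Set.univ (fun i => {x i}) := by
    ext y; simp [funext_iff, Set.mem_pi]
  rw [this, nu, Measure.pi_pi]
  simp_rw [mu_singleton]
  rw [ENNReal.ofReal_prod_of_nonneg (fun i _ => hp (x i))]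

lemma nu_set_toReal (hp : ∀ n, 0 ≤ p n) (hsum : ∑' n, p n = 1) {K : ℕ} (s : Set (Fin K → ℕ)) :
    (nu (mu p) K s).toReal = ∑' x : s, ∏ i, p ((x : Fin K → ℕ) i) := by
  haveI := mu_isProb hp hsum
  rw [nu_set_eq_tsum s]
  rw [ENNReal.tsum_toReal_eq (fun x => by
    rw [nu_singleton hp hsum]; exact ENNReal.ofReal_ne_top)]
  congr 1; ext x
  rw [nu_singleton hp hsum, ENNReal.toReal_ofReal (Finset.prod_nonneg fun i _ => hp _)]

/-- Truncation of f at level M. -/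
def trunc (f : ℕ → ℝ) (M : ℕ) (n : ℕ) : ℝ := if |f n| ≤ M then f n else 0

lemma abs_trunc_le_abs (f : ℕ → ℝ) (M n : ℕ) : |trunc f M n| ≤ |f n| := by
  unfold trunc; split <;> simp [abs_nonneg]

lemma abs_trunc_le (f : ℕ → ℝ) (M n : ℕ) : |trunc f M n| ≤ M := by
  unfold trunc; split
  · assumption
  · simp

lemma abs_sub_trunc_le_abs (f : ℕ → ℝ) (M n : ℕ) : |f n - trunc f M n| ≤ |f n| := by
  unfold trunc; split <;> simp [abs_nonneg]

lemma trunc_tendsto (μ : Measure ℕ) [IsFiniteMeasure μ] {f : ℕ → ℝ} (hf : Integrable f μ) :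
    Tendsto (fun M : ℕ => ∫ n, |f n - trunc f M n| ∂μ) atTop (𝓝 0) := by
  have h := tendsto_integral_of_dominated_convergence (μ := μ)
    (F := fun (M : ℕ) n => |f n - trunc f M n|) (f := fun _ => (0 : ℝ))
    (bound := fun n => |f n|)
    (fun M => (measurable_of_countable _).aestronglyMeasurable)
    hf.abs
    (fun M => Eventually.of_forall fun n => by
      rw [Real.norm_eq_abs, abs_abs]; exact abs_sub_trunc_le_abs f M n)
    (Eventually.of_forall fun n => by
      refine tendsto_const_nhds.congr' ?_
      filter_upwards [eventually_ge_atTop ⌈|f n|⌉₊] with M hM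
      have hle : |f n| ≤ (M : ℝ) := le_trans (Nat.le_ceil _) (by exact_mod_cast hM)
      show (0 : ℝ) = _
      simp [trunc, hle])
  simpa using h

end AEP

open AEP

/-- **Asymptotic equipartition property**: the probability of the ε-typical set
under the K-fold product distribution tends to 1 as K → ∞. (Note that in Lean,
`Real.logb 2 0 = 0`, so the convention `0·log₂ 0 = 0` is automatic.) -/
theorem typical_set_probability_tendsto_one
    (p : ℕ → ℝ) (hp : ∀ n, 0 ≤ p n) (hsum : ∑' n, p n = 1)
    (hfin : Summable fun n => p n * |Real.logb 2 (p n)|)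
    (H : ℝ) (hH : H = -∑' n, p n * Real.logb 2 (p n))
    (ε : ℝ) (hε : 0 < ε) :
    Tendsto
      (fun K : ℕ =>
        ∑' x : {x : Fin K → ℕ //
            (∀ i, 0 < p (x i)) ∧
            |(-(1 / (K : ℝ))) * (∑ i : Fin K, Real.logb 2 (p (x i))) - H| ≤ ε},
          ∏ i : Fin K, p (x.1 i))
      atTop (nhds 1) := by
  classical
  haveI := mu_isProb hp hsum
  set μ := mu p with hμ
  set f : ℕ → ℝ := fun n => -Real.logb 2 (p n) with hf
  -- the typical event (without the positivity restriction)
  set E : ∀ K : ℕ, Set (Fin K → ℕ) := fun K =>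
    {x | |(-(1 / (K : ℝ))) * (∑ i : Fin K, Real.logb 2 (p (x i))) - H| ≤ ε} with hE
  have hf_int : Integrable f μ := by
    refine integrable_mu hp ?_
    have : (fun n => p n * |f n|) = fun n => p n * |Real.logb 2 (p n)| := by
      funext n; rw [hf]; rw [abs_neg]
    rw [this]; exact hfin
  have hf_integral : ∫ n, f n ∂μ = H := by
    rw [integral_mu hp hf_int, hH]
    rw [← tsum_neg]
    congr 1; ext n; ring
  -- Step 1: rewrite the target as the measure of E K
  have step1 : ∀ K : ℕ,
      (∑' x : {x : Fin K → ℕ //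
          (∀ i, 0 < p (x i)) ∧
          |(-(1 / (K : ℝ))) * (∑ i : Fin K, Real.logb 2 (p (x i))) - H| ≤ ε},
        ∏ i : Fin K, p (x.1 i)) = (nu μ K (E K)).toReal := by
    intro K
    set G : Set (Fin K → ℕ) := {x | ∀ i, 0 < p (x i)} with hG
    have hset : {x : Fin K → ℕ |
        (∀ i, 0 < p (x i)) ∧
        |(-(1 / (K : ℝ))) * (∑ i : Fin K, Real.logb 2 (p (x i))) - H| ≤ ε} = E K ∩ G := by
      ext x; simp [hE, hG, and_comm]
    have hGc : nu μ K Gᶜ = 0 := by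
      have hGc_eq : Gᶜ = ⋃ i : Fin K, (fun x : Fin K → ℕ => x i) ⁻¹' {n | p n = 0} := by
        ext x
        simp only [hG, Set.mem_compl_iff, Set.mem_setOf_eq, not_forall, Set.mem_iUnion,
          Set.mem_preimage]
        constructor
        · rintro ⟨i, hi⟩; exact ⟨i, le_antisymm (not_lt.mp hi) (hp _)⟩
        · rintro ⟨i, hi⟩; exact ⟨i, by rw [hi]; exact lt_irrefl 0⟩
      rw [hGc_eq]
      refine measure_iUnion_null fun i => ?_
      rw [nu_eval_preimage]
      have : μ {n | p n = 0} = 0 := by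
        rw [hμ, mu_apply]
        refine ENNReal.tsum_eq_zero.mpr fun n => ?_
        by_cases hn : p n = 0
        · simp [hn]
        · simp [Set.indicator_apply, Set.mem_setOf_eq, hn]
      exact this
    have hνS : nu μ K (E K ∩ G) = nu μ K (E K) := by
      have : E K ∩ G = E K \ Gᶜ := by ext x; simp [Set.mem_diff]
      rw [this, measure_diff_null hGc]
    calc (∑' x : {x : Fin K → ℕ //
          (∀ i, 0 < p (x i)) ∧
          |(-(1 / (K : ℝ))) * (∑ i : Fin K, Real.logb 2 (p (x i))) - H| ≤ ε},
        ∏ i : Fin K, p (x.1 i))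
        = ∑' x : (E K ∩ G : Set (Fin K → ℕ)), ∏ i : Fin K, p ((x : Fin K → ℕ) i) := by
          exact tsum_congr_set_coe (fun x : Fin K → ℕ => ∏ i : Fin K, p (x i)) hset
      _ = (nu μ K (E K ∩ G)).toReal := (nu_set_toReal hp hsum _).symm
      _ = (nu μ K (E K)).toReal := by rw [hνS]
  have hfs : Summable (fun n => p n * |f n|) := by
    have : (fun n => p n * |f n|) = fun n => p n * |Real.logb 2 (p n)| := by
      funext n; rw [hf]; rw [abs_neg]
    rw [this]; exact hfin
  -- Step 2: the measure of the complement tends to 0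
  have step2 : Tendsto (fun K => (nu μ K (E K)ᶜ).toReal) atTop (𝓝 0) := by
    rw [Metric.tendsto_atTop]
    intro η hη
    -- choose the truncation level M
    have htr := trunc_tendsto μ hf_int
    have hmin : 0 < min (ε / 3) (ε * η / 12) := lt_min (by positivity) (by positivity)
    obtain ⟨M, hM⟩ := (htr.eventually (gt_mem_nhds hmin)).exists
    set t : ℕ → ℝ := trunc f M with ht
    set τ : ℝ := ∫ n, |f n - t n| ∂μ with hτdef
    have hτ0 : 0 ≤ τ := integral_nonneg fun n => abs_nonneg _
    have hτε : τ < ε / 3 := lt_of_lt_of_le hM (min_le_left _ _)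
    have hτη : τ < ε * η / 12 := lt_of_lt_of_le hM (min_le_right _ _)
    have ht_int : Integrable t μ := by
      refine integrable_mu hp (Summable.of_nonneg_of_le
        (fun n => mul_nonneg (hp n) (abs_nonneg _)) (fun n => ?_) hfs)
      exact mul_le_mul_of_nonneg_left (abs_trunc_le_abs f M n) (hp n)
    have hr_int : Integrable (fun n => f n - t n) μ := hf_int.sub ht_int
    have hrabs_int : Integrable (fun n => |f n - t n|) μ := hr_int.abs
    set m : ℝ := ∫ n, t n ∂μ with hmdef
    have hmH : |m - H| ≤ τ := by
      calc |m - H| = |∫ n, (t n - f n) ∂μ| := by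
            rw [integral_sub ht_int hf_int, hf_integral]
        _ ≤ ∫ n, |t n - f n| ∂μ := by
            simpa [Real.norm_eq_abs] using
              norm_integral_le_integral_norm (μ := μ) (fun n => t n - f n)
        _ = τ := by rw [hτdef]; simp_rw [abs_sub_comm]
    -- choose the threshold N
    obtain ⟨N₀, hN₀⟩ : ∃ N : ℕ, 18 * (M : ℝ) ^ 2 / (ε ^ 2 * η) < N := exists_nat_gt _
    refine ⟨max 1 N₀, fun K hK => ?_⟩
    have hK1 : 1 ≤ K := le_trans (le_max_left _ _) hK
    have hKpos : (0 : ℝ) < K := by exact_mod_cast hK1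
    have hKB : 18 * (M : ℝ) ^ 2 / (ε ^ 2 * η) < K :=
      lt_of_lt_of_le hN₀ (by exact_mod_cast le_trans (le_max_right _ _) hK)
    set ν : Measure (Fin K → ℕ) := nu μ K with hνdef
    set Y : (Fin K → ℕ) → ℝ := fun x => ∑ i, t (x i) with hY
    set R : (Fin K → ℕ) → ℝ := fun x => ∑ i, |f (x i) - t (x i)| with hR
    have hY_int : Integrable Y ν :=
      integrable_finset_sum _ fun i _ => integrable_comp_eval ht_int i
    have hR_int : Integrable R ν :=
      integrable_finset_sum _ fun i _ => integrable_comp_eval hrabs_int i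
    have hY_integral : ∫ x, Y x ∂ν = K * m := by
      rw [hY, integral_finset_sum _ fun i _ => integrable_comp_eval ht_int i]
      simp_rw [AEP.integral_comp_eval]
      simp [hmdef, mul_comm]
    have hR_integral : ∫ x, R x ∂ν = K * τ := by
      have h1 : ∀ i : Fin K, ∫ x : Fin K → ℕ, |f (x i) - t (x i)| ∂ν = τ := fun i =>
        (integral_comp_eval i (fun n => |f n - t n|)).trans hτdef.symm
      rw [hR, integral_finset_sum _ fun i _ => integrable_comp_eval hrabs_int i]
      refine (Finset.sum_congr rfl fun i _ => h1 i).trans ?_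
      simp [mul_comm]
    set A : Set (Fin K → ℕ) := {x | (K : ℝ) * ε / 3 ≤ R x} with hA
    set B : Set (Fin K → ℕ) := {x | (K : ℝ) * ε / 3 ≤ |Y x - ∫ a, Y a ∂ν|} with hB
    -- the complement of the typical set is contained in A ∪ B
    have hsub : (E K)ᶜ ⊆ A ∪ B := by
      intro x hx
      by_contra hxAB
      rw [Set.mem_union] at hxAB
      push_neg at hxAB
      obtain ⟨hxA, hxB⟩ := hxAB
      rw [hA, Set.mem_setOf_eq, not_le] at hxA
      rw [hB, Set.mem_setOf_eq, not_le, hY_integral] at hxB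
      apply hx
      show |(-(1 / (K : ℝ))) * (∑ i : Fin K, Real.logb 2 (p (x i))) - H| ≤ ε
      have h1 : ∑ i : Fin K, f (x i) = Y x + ∑ i : Fin K, (f (x i) - t (x i)) := by
        rw [hY, ← Finset.sum_add_distrib]
        exact Finset.sum_congr rfl fun i _ => by ring
      have hS : (∑ i : Fin K, Real.logb 2 (p (x i))) = -(∑ i : Fin K, f (x i)) := by
        rw [← Finset.sum_neg_distrib]
        exact Finset.sum_congr rfl fun i _ => by rw [hf]; ring
      have key : (-(1 / (K : ℝ))) * (∑ i : Fin K, Real.logb 2 (p (x i))) - H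
          = ((Y x - K * m) + (∑ i : Fin K, (f (x i) - t (x i))) + K * (m - H)) / K := by
        rw [hS, h1]
        field_simp
        ring
      rw [key, abs_div, abs_of_pos hKpos, div_le_iff₀ hKpos]
      refine le_of_lt ?_
      have e1 : |∑ i : Fin K, (f (x i) - t (x i))| ≤ R x := by
        rw [hR]; exact Finset.abs_sum_le_sum_abs _ _
      have e2 : |(K : ℝ) * (m - H)| ≤ K * (ε / 3) := by
        rw [abs_mul, abs_of_pos hKpos]
        exact mul_le_mul_of_nonneg_left (le_trans hmH (le_of_lt hτε)) (le_of_lt hKpos)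
      calc |(Y x - K * m) + (∑ i : Fin K, (f (x i) - t (x i))) + (K : ℝ) * (m - H)|
          ≤ |Y x - K * m| + |∑ i : Fin K, (f (x i) - t (x i))| + |(K : ℝ) * (m - H)| :=
            abs_add_three _ _ _
        _ ≤ |Y x - K * m| + R x + K * (ε / 3) := by
            gcongr
        _ < (K : ℝ) * ε / 3 + (K : ℝ) * ε / 3 + K * (ε / 3) := by
            gcongr
        _ = ε * K := by ring
    -- Markov bound on A
    have hAbound : (ν A).toReal < η / 4 := by
      have hmark := mul_meas_ge_le_integral_of_nonneg (μ := ν)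
        (Eventually.of_forall fun x => Finset.sum_nonneg fun i _ => abs_nonneg _ :
          0 ≤ᵐ[ν] R) hR_int ((K : ℝ) * ε / 3)
      rw [hR_integral] at hmark
      have hc : (0 : ℝ) < (K : ℝ) * ε / 3 := by positivity
      have h2 : (ν A).toReal ≤ (K * τ) / ((K : ℝ) * ε / 3) := by
        rw [le_div_iff₀ hc]
        calc (ν A).toReal * ((K : ℝ) * ε / 3) = (K : ℝ) * ε / 3 * (ν A).toReal := by ring
          _ ≤ K * τ := hmark
      have h3 : (K * τ) / ((K : ℝ) * ε / 3) = 3 * τ / ε := by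
        field_simp
      rw [h3] at h2
      refine lt_of_le_of_lt h2 ?_
      rw [div_lt_iff₀ hε]
      nlinarith
    -- Chebyshev bound on B
    have hmem2 : ∀ i : Fin K, MemLp (fun x : Fin K → ℕ => t (x i)) 2 ν := by
      intro i
      refine MemLp.mono_exponent ?_ le_top
      exact memLp_top_of_bound (measurable_of_countable _).aestronglyMeasurable (M : ℝ)
        (Eventually.of_forall fun x => by
          rw [Real.norm_eq_abs]; exact abs_trunc_le f M (x i))
    have hY2 : MemLp Y 2 ν := by
      have : Y = ∑ i : Fin K, (fun x : Fin K → ℕ => t (x i)) := by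
        funext x; rw [hY]; simp
      rw [this]
      exact memLp_finsetSum' _ fun i _ => hmem2 i
    have hvar : variance Y ν ≤ K * (M : ℝ) ^ 2 := by
      have hYsum : Y = ∑ i : Fin K, (fun x : Fin K → ℕ => t (x i)) := by
        funext x; rw [hY]; simp
      rw [hYsum, IndepFun.variance_sum (fun i _ => hmem2 i)
        (fun i _ j _ hij => ((indep_coords (μ := μ)).indepFun hij).comp (measurable_of_countable t) (measurable_of_countable t))]
      have hvar_le : ∀ i : Fin K, variance (fun x : Fin K → ℕ => t (x i)) ν ≤ (M : ℝ) ^ 2 := by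
        intro i
        refine le_trans (variance_le_expectation_sq
          (measurable_of_countable _).aestronglyMeasurable) ?_
        have hint2 : Integrable (fun x : Fin K → ℕ => (t (x i)) ^ 2) ν := by
          have hg2 : Integrable (fun n => (t n) ^ 2) μ := by
            refine integrable_mu hp (Summable.of_nonneg_of_le
            (fun n => mul_nonneg (hp n) (abs_nonneg _)) (fun n => ?_)
            ((summable_p hsum).mul_right ((M : ℝ) ^ 2)))
            refine mul_le_mul_of_nonneg_left ?_ (hp n)
            rw [abs_pow]
            exact pow_le_pow_left₀ (abs_nonneg _) (abs_trunc_le f M n) 2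
          exact integrable_comp_eval (μ := μ) hg2 i
        have hptw : ∀ x : Fin K → ℕ, (t (x i)) ^ 2 ≤ (M : ℝ) ^ 2 := fun x => by
          have h := abs_le.mp (abs_trunc_le f M (x i))
          exact sq_le_sq' h.1 h.2
        calc ∫ x, ((fun x : Fin K → ℕ => t (x i)) ^ 2) x ∂ν
            = ∫ x, (t (x i)) ^ 2 ∂ν := by simp [Pi.pow_apply]
          _ ≤ ∫ _x, (M : ℝ) ^ 2 ∂ν := integral_mono hint2 (integrable_const _) hptw
          _ = (M : ℝ) ^ 2 := by simp
      calc ∑ i : Fin K, variance (fun x : Fin K → ℕ => t (x i)) ν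
          ≤ ∑ _i : Fin K, (M : ℝ) ^ 2 := Finset.sum_le_sum fun i _ => hvar_le i
        _ = K * (M : ℝ) ^ 2 := by simp [mul_comm]
    have hcheb := meas_ge_le_variance_div_sq (μ := ν) hY2
      (c := (K : ℝ) * ε / 3) (by positivity)
    have hBbound : (ν B).toReal < η / 2 := by
      have h1 : (ν B).toReal ≤ (ENNReal.ofReal
          (variance Y ν / ((K : ℝ) * ε / 3) ^ 2)).toReal := by
        refine ENNReal.toReal_mono ENNReal.ofReal_ne_top ?_
        exact hcheb
      rw [ENNReal.toReal_ofReal (div_nonneg (variance_nonneg _ _) (by positivity))] at h1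
      have h2 : variance Y ν / ((K : ℝ) * ε / 3) ^ 2 ≤ 9 * (M : ℝ) ^ 2 / (ε ^ 2 * K) := by
        have hd : (0 : ℝ) < ((K : ℝ) * ε / 3) ^ 2 := by positivity
        calc variance Y ν / ((K : ℝ) * ε / 3) ^ 2
            ≤ (K * (M : ℝ) ^ 2) / ((K : ℝ) * ε / 3) ^ 2 := by gcongr
          _ = 9 * (M : ℝ) ^ 2 / (ε ^ 2 * K) := by field_simp; ring
      have h3 : 9 * (M : ℝ) ^ 2 / (ε ^ 2 * K) < η / 2 := by
        rw [div_lt_iff₀ (by positivity)]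
        have h4 := (div_lt_iff₀ (by positivity : (0 : ℝ) < ε ^ 2 * η)).mp hKB
        nlinarith [sq_nonneg (M : ℝ)]
      linarith [le_trans h1 h2]
    -- combine
    rw [Real.dist_eq, sub_zero, abs_of_nonneg ENNReal.toReal_nonneg]
    calc (ν (E K)ᶜ).toReal ≤ ((ν A) + (ν B)).toReal := by
          refine ENNReal.toReal_mono ?_ (le_trans (measure_mono hsub) (measure_union_le _ _))
          exact ENNReal.add_ne_top.mpr ⟨measure_ne_top _ _, measure_ne_top _ _⟩
      _ = (ν A).toReal + (ν B).toReal :=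
          ENNReal.toReal_add (measure_ne_top _ _) (measure_ne_top _ _)
      _ < η := by linarith
  -- conclude
  have hfun : ∀ K : ℕ, (nu μ K (E K)).toReal = 1 - (nu μ K (E K)ᶜ).toReal := by
    intro K
    have h1 : nu μ K (E K) = 1 - nu μ K (E K)ᶜ := by
      have := measure_compl (μ := nu μ K) (meas_all (E K)ᶜ) (measure_ne_top _ _)
      simpa [compl_compl] using this
    rw [h1, ENNReal.toReal_sub_of_le prob_le_one ENNReal.one_ne_top, ENNReal.toReal_one]
  have : Tendsto (fun K => 1 - (nu μ K (E K)ᶜ).toReal) atTop (𝓝 (1 - 0)) :=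
    tendsto_const_nhds.sub step2
  simp only [sub_zero] at this
  refine Tendsto.congr (fun K => ?_) this
  rw [← hfun K, step1 K]
end
end

section
/- Let p : ℕ → ℝ be a probability distribution (p n ≥ 0 for all n and ∑' n, p n = 1) with ∑' n, p n · |log₂ (p n)| < ∞, and let H = −∑' n, p n · log₂ (p n) (with convention 0·log₂ 0 = 0). Fix ε > 0 and define, for K ∈ ℕ, the ε-typical set T(K, ε) = { x : Fin K → ℕ | 2^{−K(H+ε)} ≤ ∏_{i < K} p (x i) ≤ 2^{−K(H−ε)} }. Then: (a) T(K, ε) is finite with cardinality |T(K, ε)| ≤ 2^{K(H+ε)} for every K; and (b) for every δ > 0 there exists K₀ such that for all K ≥ K₀, the product probability satisfies ∑_{x ∈ T(K,ε)} ∏_{i < K} p (x i) ≥ 1 − δ and |T(K, ε)| ≥ (1 − δ) · 2^{K(H−ε)}. -/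
open Real Finset

set_option maxHeartbeats 2000000
namespace AEP

variable {β : Type*}

lemma summable_pair {A : ℕ → ℝ} {B : β → ℝ} (hA : Summable A) (hB : Summable B) :
    Summable (fun y : ℕ × β => A y.1 * B y.2) := by
  rw [← summable_abs_iff]
  have h := Summable.mul_of_nonneg (f := fun n => |A n|) (g := fun y => |B y|)
    (summable_abs_iff.mpr hA) (summable_abs_iff.mpr hB)
    (fun n => abs_nonneg _) (fun y => abs_nonneg _)
  apply h.congr
  intro y
  rw [abs_mul]

lemma tsum_pair {A : ℕ → ℝ} {B : β → ℝ} (hA : Summable A) (hB : Summable B) :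
    ∑' y : ℕ × β, A y.1 * B y.2 = (∑' n, A n) * (∑' y, B y) := by
  rw [(summable_pair hA hB).tsum_prod' (fun n => hB.mul_left (A n))]
  simp_rw [tsum_mul_left, tsum_mul_right]

lemma cons_eq {K : ℕ} {F : (Fin (K+1) → ℕ) → ℝ} {G : ℕ × (Fin K → ℕ) → ℝ}
    (h : ∀ n y, F (Fin.cons n y) = G (n, y)) :
    F ∘ ⇑(Fin.consEquiv (fun _ : Fin (K+1) => ℕ)) = G := by
  funext z
  obtain ⟨n, y⟩ := z
  exact h n y

lemma cons_summable {K : ℕ} {F : (Fin (K+1) → ℕ) → ℝ} {G : ℕ × (Fin K → ℕ) → ℝ}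
    (h : ∀ n y, F (Fin.cons n y) = G (n, y)) (hG : Summable G) : Summable F := by
  rw [← Equiv.summable_iff (Fin.consEquiv (fun _ : Fin (K+1) => ℕ)), cons_eq h]
  exact hG

lemma cons_tsum {K : ℕ} {F : (Fin (K+1) → ℕ) → ℝ} {G : ℕ × (Fin K → ℕ) → ℝ}
    (h : ∀ n y, F (Fin.cons n y) = G (n, y)) :
    ∑' x, F x = ∑' z : ℕ × (Fin K → ℕ), G z := by
  rw [← Equiv.tsum_eq (Fin.consEquiv (fun _ : Fin (K+1) => ℕ)) F]
  exact tsum_congr fun z => by obtain ⟨n, y⟩ := z; exact h n y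

lemma summable_mul_bounded {q : β → ℝ} (hq : Summable q) (h0 : ∀ y, 0 ≤ q y)
    {B : β → ℝ} {C : ℝ} (hB : ∀ y, |B y| ≤ C) : Summable fun y => q y * B y := by
  rw [← summable_abs_iff]
  apply Summable.of_nonneg_of_le (fun y => abs_nonneg _) (fun y => ?_) (hq.mul_right C)
  rw [abs_mul, abs_of_nonneg (h0 y)]
  exact mul_le_mul_of_nonneg_left (hB y) (h0 y)

/-- The product weight of a string. -/
def qf (p : ℕ → ℝ) (K : ℕ) (x : Fin K → ℕ) : ℝ := ∏ i, p (x i)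

lemma qf_cons (p : ℕ → ℝ) {K : ℕ} (n : ℕ) (y : Fin K → ℕ) :
    qf p (K+1) (Fin.cons n y) = p n * qf p K y := by
  rw [qf, Fin.prod_univ_succ]
  simp [qf]

lemma qf_nonneg {p : ℕ → ℝ} (hp : ∀ n, 0 ≤ p n) (K : ℕ) (x : Fin K → ℕ) :
    0 ≤ qf p K x := Finset.prod_nonneg fun i _ => hp _

lemma qf_summable_tsum {p : ℕ → ℝ} (hp : ∀ n, 0 ≤ p n) (hps : Summable p)
    (hs1 : ∑' n, p n = 1) :
    ∀ K, Summable (qf p K) ∧ ∑' x, qf p K x = 1 := by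
  intro K
  induction K with
  | zero =>
    constructor
    · exact Summable.of_finite
    · rw [tsum_eq_single (default : Fin 0 → ℕ) (fun b hb => absurd (Subsingleton.elim b default) hb)]
      simp [qf]
  | succ K ih =>
    have hG : Summable (fun z : ℕ × (Fin K → ℕ) => p z.1 * qf p K z.2) :=
      summable_pair (A := p) (B := qf p K) hps ih.1
    have hc : ∀ n y, qf p (K+1) (Fin.cons n y) = (fun z : ℕ × (Fin K → ℕ) => p z.1 * qf p K z.2) (n, y) :=
      fun n y => qf_cons p n y
    refine ⟨cons_summable (G := fun z : ℕ × (Fin K → ℕ) => p z.1 * qf p K z.2) hc hG, ?_⟩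
    rw [cons_tsum (G := fun z : ℕ × (Fin K → ℕ) => p z.1 * qf p K z.2) hc,
      tsum_pair hps ih.1, hs1, ih.2, one_mul]

/-- Expectation of an additive functional under the product weights. -/
lemma expect {p : ℕ → ℝ} (hp : ∀ n, 0 ≤ p n) (hps : Summable p) (hs1 : ∑' n, p n = 1)
    {w : ℕ → ℝ} (hw : Summable fun n => p n * w n) :
    ∀ K, Summable (fun x : Fin K → ℕ => qf p K x * ∑ i, w (x i)) ∧
      ∑' x : Fin K → ℕ, qf p K x * ∑ i, w (x i) = K * ∑' n, p n * w n := by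
  intro K
  induction K with
  | zero =>
    constructor
    · apply Summable.of_finite
    · rw [tsum_eq_single (default : Fin 0 → ℕ) (fun b hb => absurd (Subsingleton.elim b default) hb)]
      simp
  | succ K ih =>
    have hq := qf_summable_tsum hp hps hs1 K
    set G : ℕ × (Fin K → ℕ) → ℝ := fun z =>
      (p z.1 * w z.1) * qf p K z.2 + p z.1 * (qf p K z.2 * ∑ i, w (z.2 i)) with hGdef
    have hc : ∀ n y, qf p (K+1) (Fin.cons n y) * ∑ i, w ((Fin.cons n y : Fin (K+1) → ℕ) i) = G (n, y) := by
      intro n y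
      rw [qf_cons, Fin.sum_univ_succ]
      simp only [Fin.cons_zero, Fin.cons_succ, hGdef]
      ring
    have hG1 : Summable (fun z : ℕ × (Fin K → ℕ) => (p z.1 * w z.1) * qf p K z.2) :=
      summable_pair (A := fun n => p n * w n) (B := qf p K) hw hq.1
    have hG2 : Summable (fun z : ℕ × (Fin K → ℕ) => p z.1 * (qf p K z.2 * ∑ i, w (z.2 i))) :=
      summable_pair (A := p) (B := fun y : Fin K → ℕ => qf p K y * ∑ i, w (y i)) hps ih.1
    have hG : Summable G := hG1.add hG2
    refine ⟨cons_summable (F := fun x : Fin (K+1) → ℕ => qf p (K+1) x * ∑ i, w (x i)) (G := G) hc hG, ?_⟩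
    rw [cons_tsum (F := fun x : Fin (K+1) → ℕ => qf p (K+1) x * ∑ i, w (x i)) (G := G) hc, hGdef, Summable.tsum_add hG1 hG2,
      tsum_pair (A := fun n => p n * w n) (B := qf p K) hw hq.1,
      tsum_pair (A := p) (B := fun y : Fin K → ℕ => qf p K y * ∑ i, w (y i)) hps ih.1,
      hq.2, hs1, ih.2]
    push_cast
    ring


/-- Second moment of a centered bounded additive functional. -/
lemma variance {p : ℕ → ℝ} (hp : ∀ n, 0 ≤ p n) (hps : Summable p) (hs1 : ∑' n, p n = 1)
    {c : ℕ → ℝ} {M : ℝ} (hM : 0 ≤ M) (hc : ∀ n, |c n| ≤ M)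
    (hc0 : ∑' n, p n * c n = 0) :
    ∀ K, Summable (fun x : Fin K → ℕ => qf p K x * (∑ i, c (x i))^2) ∧
      ∑' x : Fin K → ℕ, qf p K x * (∑ i, c (x i))^2 = K * ∑' n, p n * (c n)^2 := by
  have hpc : Summable (fun n => p n * c n) :=
    summable_mul_bounded hps hp hc
  have hpc2 : Summable (fun n => p n * (c n)^2) :=
    summable_mul_bounded hps hp (C := M^2) (fun n => by
      rw [abs_pow]
      exact pow_le_pow_left₀ (abs_nonneg _) (hc n) 2)
  intro K
  induction K with
  | zero =>
    constructor
    · apply Summable.of_finite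
    · rw [tsum_eq_single (default : Fin 0 → ℕ) (fun b hb => absurd (Subsingleton.elim b default) hb)]
      simp
  | succ K ih =>
    have hq := qf_summable_tsum hp hps hs1 K
    have habsS : ∀ y : Fin K → ℕ, |∑ i, c (y i)| ≤ K * M := by
      intro y
      calc |∑ i, c (y i)| ≤ ∑ i, |c (y i)| := Finset.abs_sum_le_sum_abs _ _
        _ ≤ ∑ _i : Fin K, M := Finset.sum_le_sum fun i _ => hc _
        _ = K * M := by simp [mul_comm]
    have hqS : Summable (fun y : Fin K → ℕ => qf p K y * ∑ i, c (y i)) :=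
      summable_mul_bounded hq.1 (qf_nonneg hp K) habsS
    have hqS2 : Summable (fun y : Fin K → ℕ => qf p K y * (∑ i, c (y i))^2) := ih.1
    set G : ℕ × (Fin K → ℕ) → ℝ := fun z =>
      (p z.1 * (c z.1)^2) * qf p K z.2 + (2 * (p z.1 * c z.1)) * (qf p K z.2 * ∑ i, c (z.2 i))
        + p z.1 * (qf p K z.2 * (∑ i, c (z.2 i))^2) with hGdef
    have hc' : ∀ n y, qf p (K+1) (Fin.cons n y) * (∑ i, c ((Fin.cons n y : Fin (K+1) → ℕ) i))^2 = G (n, y) := by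
      intro n y
      rw [qf_cons, Fin.sum_univ_succ]
      simp only [Fin.cons_zero, Fin.cons_succ, hGdef]
      ring
    have hG1 : Summable (fun z : ℕ × (Fin K → ℕ) => (p z.1 * (c z.1)^2) * qf p K z.2) :=
      summable_pair (A := fun n => p n * (c n)^2) (B := qf p K) hpc2 hq.1
    have hG2 : Summable (fun z : ℕ × (Fin K → ℕ) => (2 * (p z.1 * c z.1)) * (qf p K z.2 * ∑ i, c (z.2 i))) :=
      summable_pair (A := fun n => 2 * (p n * c n)) (B := fun y : Fin K → ℕ => qf p K y * ∑ i, c (y i))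
        (hpc.mul_left 2) hqS
    have hG3 : Summable (fun z : ℕ × (Fin K → ℕ) => p z.1 * (qf p K z.2 * (∑ i, c (z.2 i))^2)) :=
      summable_pair (A := p) (B := fun y : Fin K → ℕ => qf p K y * (∑ i, c (y i))^2) hps hqS2
    have hG : Summable G := (hG1.add hG2).add hG3
    refine ⟨cons_summable (F := fun x : Fin (K+1) → ℕ => qf p (K+1) x * (∑ i, c (x i))^2) (G := G) hc' hG, ?_⟩
    rw [cons_tsum (F := fun x : Fin (K+1) → ℕ => qf p (K+1) x * (∑ i, c (x i))^2) (G := G) hc',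
      hGdef, Summable.tsum_add (hG1.add hG2) hG3, Summable.tsum_add hG1 hG2,
      tsum_pair (A := fun n => p n * (c n)^2) (B := qf p K) hpc2 hq.1,
      tsum_pair (A := fun n => 2 * (p n * c n)) (B := fun y : Fin K → ℕ => qf p K y * ∑ i, c (y i))
        (hpc.mul_left 2) hqS,
      tsum_pair (A := p) (B := fun y : Fin K → ℕ => qf p K y * (∑ i, c (y i))^2) hps hqS2,
      hq.2, hs1, ih.2, tsum_mul_left, hc0]
    push_cast
    ring

/-- Markov's inequality for summable weights. -/
lemma markov {β : Type*} {q F : β → ℝ} (hq : Summable q) (h0 : ∀ y, 0 ≤ q y)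
    (hF : ∀ y, 0 ≤ F y) (hqF : Summable fun y => q y * F y) {t : ℝ} (ht : 0 < t)
    {S : Set β} (hS : ∀ x ∈ S, t ≤ F x) :
    ∑' x, S.indicator q x ≤ (∑' x, q x * F x) / t := by
  have hind : Summable (S.indicator q) :=
    Summable.of_nonneg_of_le (fun x => Set.indicator_nonneg (fun y _ => h0 y) x)
      (fun x => Set.indicator_le_self' (fun y _ => h0 y) x) hq
  rw [le_div_iff₀ ht, ← tsum_mul_right]
  refine (hind.mul_right t).tsum_le_tsum (fun x => ?_) hqF
  by_cases hx : x ∈ S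
  · rw [Set.indicator_of_mem hx]
    calc q x * t ≤ q x * F x := mul_le_mul_of_nonneg_left (hS x hx) (h0 x)
      _ = q x * F x := rfl
  · rw [Set.indicator_of_notMem hx, zero_mul]
    exact mul_nonneg (h0 x) (hF x)

/-- Truncation: the tail expectation can be made arbitrarily small. -/
lemma trunc_s13 {p φ : ℕ → ℝ} (hp : ∀ n, 0 ≤ p n) (hφ0 : ∀ n, 0 ≤ φ n)
    (hpφ : Summable fun n => p n * φ n) {η : ℝ} (hη : 0 < η) :
    ∃ M : ℝ, 0 ≤ M ∧ ∑' n, p n * (φ n - min (φ n) M) ≤ η := by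
  have htend := hpφ.hasSum.tendsto_sum_nat
  have hev : ∀ᶠ N in Filter.atTop,
      (∑' n, p n * φ n) - η < ∑ n ∈ Finset.range N, p n * φ n :=
    htend.eventually (eventually_gt_nhds (by linarith : (∑' n, p n * φ n) - η < ∑' n, p n * φ n))
  obtain ⟨N, hN⟩ := hev.exists
  set M := ∑ n ∈ Finset.range N, φ n with hMdef
  have hM0 : 0 ≤ M := Finset.sum_nonneg fun n _ => hφ0 n
  refine ⟨M, hM0, ?_⟩
  have hMb : ∀ n, n < N → φ n ≤ M :=
    fun n hn => Finset.single_le_sum (fun m _ => hφ0 m) (Finset.mem_range.mpr hn)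
  have hrsum : Summable (fun n => if n < N then p n * φ n else 0) :=
    summable_of_ne_finset_zero (s := Finset.range N)
      (fun n hn => if_neg (by simpa using hn))
  have hpt : ∀ n, p n * (φ n - min (φ n) M) ≤ p n * φ n - if n < N then p n * φ n else 0 := by
    intro n
    by_cases hn : n < N
    · rw [if_pos hn, min_eq_left (hMb n hn)]
      simp
    · rw [if_neg hn, sub_zero]
      have h1 : 0 ≤ min (φ n) M := le_min (hφ0 n) hM0
      nlinarith [hp n]
  have hsub : Summable (fun n => p n * φ n - if n < N then p n * φ n else 0) := hpφ.sub hrsum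
  have hlhs : Summable (fun n => p n * (φ n - min (φ n) M)) := by
    apply Summable.of_nonneg_of_le (fun n => ?_) (fun n => ?_) hpφ
    · have h1 : min (φ n) M ≤ φ n := min_le_left _ _
      nlinarith [hp n]
    · have h1 : 0 ≤ min (φ n) M := le_min (hφ0 n) hM0
      nlinarith [hp n, hφ0 n]
  calc ∑' n, p n * (φ n - min (φ n) M)
      ≤ ∑' n, (p n * φ n - if n < N then p n * φ n else 0) := hlhs.tsum_le_tsum hpt hsub
    _ = (∑' n, p n * φ n) - ∑' n, (if n < N then p n * φ n else 0) := Summable.tsum_sub hpφ hrsum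
    _ = (∑' n, p n * φ n) - ∑ n ∈ Finset.range N, p n * φ n := by
        have h1 : ∑' n, (if n < N then p n * φ n else 0)
            = ∑ n ∈ Finset.range N, (if n < N then p n * φ n else 0) :=
          tsum_eq_sum (fun n hn => if_neg (by simpa using hn))
        have h2 : ∑ n ∈ Finset.range N, (if n < N then p n * φ n else 0)
            = ∑ n ∈ Finset.range N, p n * φ n :=
          Finset.sum_congr rfl fun n hn => if_pos (Finset.mem_range.mp hn)
        rw [h1, h2]
    _ ≤ η := by linarith [hN]

end AEP

noncomputable section

/-- The ε-typical set of strings of length `K` for the distribution `p`: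
strings whose product probability lies between `2^{-K(H+ε)}` and `2^{-K(H-ε)}`. -/
def typicalSet (p : ℕ → ℝ) (H ε : ℝ) (K : ℕ) : Set (Fin K → ℕ) :=
  {x | (2 : ℝ) ^ (-(K : ℝ) * (H + ε)) ≤ ∏ i : Fin K, p (x i) ∧
        ∏ i : Fin K, p (x i) ≤ (2 : ℝ) ^ (-(K : ℝ) * (H - ε))}

set_option maxHeartbeats 8000000 in
/-- **Typical subspace dimension bounds**: (a) the ε-typical set is finite with at
most `2^{K(H+ε)}` elements; (b) for large `K` it carries probability at least
`1 − δ` and has at least `(1 − δ)·2^{K(H−ε)}` elements. This quantifies the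
effective dimension `2^{KH}` of `K` copies of a mode with entropy `H`. -/
theorem typicalSet_card_bounds
    (p : ℕ → ℝ) (hp : ∀ n, 0 ≤ p n) (hsum : ∑' n, p n = 1)
    (hfin : Summable fun n => p n * |Real.logb 2 (p n)|)
    (H : ℝ) (hH : H = -∑' n, p n * Real.logb 2 (p n))
    (ε : ℝ) (hε : 0 < ε) :
    (∀ K : ℕ, (typicalSet p H ε K).Finite ∧
        (Nat.card (typicalSet p H ε K) : ℝ) ≤ (2 : ℝ) ^ ((K : ℝ) * (H + ε))) ∧
    (∀ δ : ℝ, 0 < δ → ∃ K₀ : ℕ, ∀ K : ℕ, K₀ ≤ K →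
        (1 - δ ≤ ∑' x : typicalSet p H ε K, ∏ i : Fin K, p (x.1 i)) ∧
        (1 - δ) * (2 : ℝ) ^ ((K : ℝ) * (H - ε)) ≤ (Nat.card (typicalSet p H ε K) : ℝ)) := by
  classical
  -- Basic facts about p
  have hps : Summable p := by
    by_contra hc
    rw [tsum_eq_zero_of_not_summable hc] at hsum
    exact one_ne_zero hsum.symm
  have hple : ∀ n, p n ≤ 1 := by
    intro n
    calc p n ≤ ∑' m, p m := hps.le_tsum n (fun m _ => hp m)
      _ = 1 := hsum
  set φ : ℕ → ℝ := fun n => -Real.logb 2 (p n) with hφdef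
  have hφ0 : ∀ n, 0 ≤ φ n :=
    fun n => neg_nonneg.mpr (Real.logb_nonpos one_lt_two (hp n) (hple n))
  have hpφ : Summable (fun n => p n * φ n) := by
    apply hfin.congr
    intro n
    rw [abs_of_nonpos (Real.logb_nonpos one_lt_two (hp n) (hple n))]
  have hHφ : H = ∑' n, p n * φ n := by
    rw [hH, ← tsum_neg]
    exact tsum_congr fun n => by rw [hφdef]; ring
  have hqst := AEP.qf_summable_tsum hp hps hsum
  -- Part (a)
  have parta : ∀ K : ℕ, (typicalSet p H ε K).Finite ∧
      (Nat.card (typicalSet p H ε K) : ℝ) ≤ (2 : ℝ) ^ ((K : ℝ) * (H + ε)) := by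
    intro K
    have hc₀pos : (0:ℝ) < (2 : ℝ) ^ (-(K : ℝ) * (H + ε)) := Real.rpow_pos_of_pos two_pos _
    have hsub : typicalSet p H ε K ⊆ {x | (2 : ℝ) ^ (-(K : ℝ) * (H + ε)) ≤ AEP.qf p K x} :=
      fun x hx => hx.1
    have hbigfin : {x : Fin K → ℕ | (2 : ℝ) ^ (-(K : ℝ) * (H + ε)) ≤ AEP.qf p K x}.Finite := by
      have h0 := (hqst K).1.tendsto_cofinite_zero
      have hev : ∀ᶠ x in Filter.cofinite, AEP.qf p K x < (2 : ℝ) ^ (-(K : ℝ) * (H + ε)) :=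
        h0.eventually (eventually_lt_nhds hc₀pos)
      rw [Filter.eventually_cofinite] at hev
      exact hev.subset fun x hx => not_lt.mpr hx
    have hTfin := hbigfin.subset hsub
    refine ⟨hTfin, ?_⟩
    have hcardeq : (Nat.card (typicalSet p H ε K) : ℝ) = (hTfin.toFinset.card : ℝ) := by
      rw [Nat.card_coe_set_eq, Set.ncard_eq_toFinset_card _ hTfin]
    have hsum1 : ∑ x ∈ hTfin.toFinset, AEP.qf p K x ≤ 1 := by
      rw [← (hqst K).2]
      exact (hqst K).1.sum_le_tsum hTfin.toFinset (fun x _ => AEP.qf_nonneg hp K x)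
    have hlow : (hTfin.toFinset.card : ℝ) * (2 : ℝ) ^ (-(K : ℝ) * (H + ε))
        ≤ ∑ x ∈ hTfin.toFinset, AEP.qf p K x := by
      have hb := Finset.card_nsmul_le_sum hTfin.toFinset (AEP.qf p K)
        ((2 : ℝ) ^ (-(K : ℝ) * (H + ε)))
        (fun x hx => (hTfin.mem_toFinset.mp hx).1)
      rwa [nsmul_eq_mul] at hb
    have hinv : (2 : ℝ) ^ (-(K : ℝ) * (H + ε)) * (2 : ℝ) ^ ((K : ℝ) * (H + ε)) = 1 := by
      rw [← Real.rpow_add two_pos]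
      norm_num
    have h2pos : (0:ℝ) < (2 : ℝ) ^ ((K : ℝ) * (H + ε)) := Real.rpow_pos_of_pos two_pos _
    have hcc : (hTfin.toFinset.card : ℝ) * (2 : ℝ) ^ (-(K : ℝ) * (H + ε)) ≤ 1 :=
      le_trans hlow hsum1
    rw [hcardeq]
    calc (hTfin.toFinset.card : ℝ)
        = ((hTfin.toFinset.card : ℝ) * (2 : ℝ) ^ (-(K : ℝ) * (H + ε)))
            * (2 : ℝ) ^ ((K : ℝ) * (H + ε)) := by
          rw [mul_assoc, hinv, mul_one]
      _ ≤ 1 * (2 : ℝ) ^ ((K : ℝ) * (H + ε)) :=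
          mul_le_mul_of_nonneg_right hcc h2pos.le
      _ = (2 : ℝ) ^ ((K : ℝ) * (H + ε)) := one_mul _
  refine ⟨parta, ?_⟩
  -- membership characterization
  have hmem : ∀ (K : ℕ) (x : Fin K → ℕ), 0 < AEP.qf p K x →
      (x ∈ typicalSet p H ε K ↔ |(∑ i, φ (x i)) - K * H| ≤ K * ε) := by
    intro K x hqx
    have hne : ∀ i : Fin K, p (x i) ≠ 0 := by
      intro i h0
      have : AEP.qf p K x = 0 := Finset.prod_eq_zero (Finset.mem_univ i) h0
      rw [this] at hqx
      exact lt_irrefl _ hqx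
    have hlog : Real.logb 2 (AEP.qf p K x) = -∑ i, φ (x i) := by
      have haux : -∑ i : Fin K, φ (x i) = ∑ i : Fin K, Real.log (p (x i)) / Real.log 2 := by
        rw [← Finset.sum_neg_distrib]
        exact Finset.sum_congr rfl fun i _ => by simp [hφdef, Real.logb]
      rw [AEP.qf, Real.logb, Real.log_prod (fun i _ => hne i), Finset.sum_div]
      exact haux.symm
    have hqeq : AEP.qf p K x = (2:ℝ) ^ (-(∑ i, φ (x i))) := by
      rw [← hlog, Real.rpow_logb two_pos (by norm_num) hqx]
    have hexp1 : -(K:ℝ) * (H + ε) = -((K:ℝ)*H) - K*ε := by ring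
    have hexp2 : -(K:ℝ) * (H - ε) = -((K:ℝ)*H) + K*ε := by ring
    constructor
    · rintro ⟨h1, h2⟩
      have h1' : (2:ℝ) ^ (-(K : ℝ) * (H + ε)) ≤ (2:ℝ) ^ (-(∑ i, φ (x i))) := by
        rw [← hqeq]; exact h1
      have h2' : (2:ℝ) ^ (-(∑ i, φ (x i))) ≤ (2:ℝ) ^ (-(K : ℝ) * (H - ε)) := by
        rw [← hqeq]; exact h2
      have hb1 := (Real.rpow_le_rpow_left_iff one_lt_two).mp h1'
      have hb2 := (Real.rpow_le_rpow_left_iff one_lt_two).mp h2'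
      rw [hexp2] at hb2
      rw [hexp1] at hb1
      rw [abs_le]
      exact ⟨by linarith, by linarith⟩
    · intro hb
      rw [abs_le] at hb
      constructor
      · show (2:ℝ) ^ (-(K : ℝ) * (H + ε)) ≤ AEP.qf p K x
        rw [hqeq]
        apply (Real.rpow_le_rpow_left_iff one_lt_two).mpr
        rw [hexp1]; linarith [hb.2]
      · show AEP.qf p K x ≤ (2:ℝ) ^ (-(K : ℝ) * (H - ε))
        rw [hqeq]
        apply (Real.rpow_le_rpow_left_iff one_lt_two).mpr
        rw [hexp2]; linarith [hb.1]
  -- Part (b)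
  intro δ hδ
  have hη : (0:ℝ) < min (ε/4) (ε*δ/8) := lt_min (by linarith) (by positivity)
  obtain ⟨M, hM0, hMη⟩ := AEP.trunc_s13 hp hφ0 hpφ hη
  set g : ℕ → ℝ := fun n => min (φ n) M with hgdef
  set h : ℕ → ℝ := fun n => φ n - g n with hhdef
  have hg0 : ∀ n, 0 ≤ g n := fun n => le_min (hφ0 n) hM0
  have hgM : ∀ n, g n ≤ M := fun n => min_le_right _ _
  have hh0 : ∀ n, 0 ≤ h n := fun n => sub_nonneg.mpr (min_le_left _ _)
  have hhφ : ∀ n, h n ≤ φ n := fun n => by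
    have := hg0 n
    show φ n - g n ≤ φ n
    linarith
  have hpg : Summable (fun n => p n * g n) :=
    AEP.summable_mul_bounded hps hp (C := M)
      (fun n => by rw [abs_of_nonneg (hg0 n)]; exact hgM n)
  have hph : Summable (fun n => p n * h n) :=
    Summable.of_nonneg_of_le (fun n => mul_nonneg (hp n) (hh0 n))
      (fun n => mul_le_mul_of_nonneg_left (hhφ n) (hp n)) hpφ
  set μg := ∑' n, p n * g n with hμgdef
  set μh := ∑' n, p n * h n with hμhdef
  have hμh_η : μh ≤ min (ε/4) (ε*δ/8) := hMη
  have hμg0 : 0 ≤ μg := tsum_nonneg fun n => mul_nonneg (hp n) (hg0 n)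
  have hμh0 : 0 ≤ μh := tsum_nonneg fun n => mul_nonneg (hp n) (hh0 n)
  have hμgM : μg ≤ M := by
    calc μg ≤ ∑' n, p n * M :=
        hpg.tsum_le_tsum (fun n => mul_le_mul_of_nonneg_left (hgM n) (hp n)) (hps.mul_right M)
      _ = M := by rw [tsum_mul_right, hsum, one_mul]
  have hgh : μg + μh = H := by
    rw [hHφ, hμgdef, hμhdef, ← Summable.tsum_add hpg hph]
    exact tsum_congr fun n => by
      show p n * g n + p n * (φ n - g n) = p n * φ n
      ring
  set c : ℕ → ℝ := fun n => g n - μg with hcdef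
  have hcM : ∀ n, |c n| ≤ M := fun n =>
    abs_le.mpr ⟨by show -M ≤ g n - μg; linarith [hg0 n, hμgM],
      by show g n - μg ≤ M; linarith [hgM n, hμg0]⟩
  have hc0 : ∑' n, p n * c n = 0 := by
    have he : (fun n => p n * c n) = fun n => p n * g n - p n * μg :=
      funext fun n => by show p n * (g n - μg) = _; ring
    rw [he, Summable.tsum_sub hpg (hps.mul_right μg), tsum_mul_right, hsum, one_mul, ← hμgdef, sub_self]
  have hpc2 : Summable (fun n => p n * (c n)^2) :=
    AEP.summable_mul_bounded hps hp (C := M^2) (fun n => by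
      rw [abs_pow]
      exact pow_le_pow_left₀ (abs_nonneg _) (hcM n) 2)
  set Ec2 := ∑' n, p n * (c n)^2 with hEc2def
  have hEc2 : Ec2 ≤ M^2 := by
    calc Ec2 ≤ ∑' n, p n * M^2 :=
        hpc2.tsum_le_tsum (fun n => mul_le_mul_of_nonneg_left
          (by rw [← sq_abs]; exact pow_le_pow_left₀ (abs_nonneg _) (hcM n) 2) (hp n))
          (hps.mul_right _)
      _ = M^2 := by rw [tsum_mul_right, hsum, one_mul]
  have hEc20 : 0 ≤ Ec2 := tsum_nonneg fun n => mul_nonneg (hp n) (sq_nonneg _)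
  clear_value g h c μg μh Ec2
  refine ⟨max 1 ⌈8*M^2/(δ*ε^2)⌉₊, ?_⟩
  intro K hK
  have hK1 : 1 ≤ K := le_trans (le_max_left _ _) hK
  have hKR : (1:ℝ) ≤ (K:ℝ) := by exact_mod_cast hK1
  have hKpos : (0:ℝ) < (K:ℝ) := by linarith
  have hKb : 8*M^2/(δ*ε^2) ≤ (K:ℝ) := by
    have h1 : (8*M^2/(δ*ε^2)) ≤ (⌈8*M^2/(δ*ε^2)⌉₊ : ℝ) := Nat.le_ceil _
    have h2 : (⌈8*M^2/(δ*ε^2)⌉₊ : ℕ) ≤ K := le_trans (le_max_right _ _) hK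
    exact h1.trans (by exact_mod_cast h2)
  -- events
  set A : Set (Fin K → ℕ) := {x | (K:ℝ)*ε/2 ≤ |∑ i, c (x i)|} with hAdef
  set B : Set (Fin K → ℕ) := {x | (K:ℝ)*ε/4 ≤ ∑ i, h (x i)} with hBdef
  have hvar := AEP.variance hp hps hsum hM0 hcM hc0 K
  have hexp := AEP.expect hp hps hsum (w := h) hph K
  have hsA : Summable (A.indicator (AEP.qf p K)) :=
    Summable.of_nonneg_of_le
      (fun x => Set.indicator_nonneg (fun y _ => AEP.qf_nonneg hp K y) x)
      (fun x => Set.indicator_le_self' (fun y _ => AEP.qf_nonneg hp K y) x) (hqst K).1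
  have hsB : Summable (B.indicator (AEP.qf p K)) :=
    Summable.of_nonneg_of_le
      (fun x => Set.indicator_nonneg (fun y _ => AEP.qf_nonneg hp K y) x)
      (fun x => Set.indicator_le_self' (fun y _ => AEP.qf_nonneg hp K y) x) (hqst K).1
  have hsT : Summable ((typicalSet p H ε K).indicator (AEP.qf p K)) :=
    Summable.of_nonneg_of_le
      (fun x => Set.indicator_nonneg (fun y _ => AEP.qf_nonneg hp K y) x)
      (fun x => Set.indicator_le_self' (fun y _ => AEP.qf_nonneg hp K y) x) (hqst K).1
  have hsTc : Summable ((typicalSet p H ε K)ᶜ.indicator (AEP.qf p K)) :=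
    Summable.of_nonneg_of_le
      (fun x => Set.indicator_nonneg (fun y _ => AEP.qf_nonneg hp K y) x)
      (fun x => Set.indicator_le_self' (fun y _ => AEP.qf_nonneg hp K y) x) (hqst K).1
  -- Chebyshev bound for A
  have hPA : ∑' x, A.indicator (AEP.qf p K) x ≤ δ/2 := by
    have hmk := AEP.markov (F := fun y : Fin K → ℕ => (∑ i, c (y i))^2) (hqst K).1 (AEP.qf_nonneg hp K)
      (fun y => sq_nonneg (∑ i, c (y i))) hvar.1
      (t := ((K:ℝ)*ε/2)^2) (by positivity)
      (S := A) (fun x hx => by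
        have hx' : (K:ℝ)*ε/2 ≤ |∑ i, c (x i)| := hx
        calc ((K:ℝ)*ε/2)^2 ≤ |∑ i, c (x i)|^2 :=
            pow_le_pow_left₀ (by positivity) hx' 2
          _ = (∑ i, c (x i))^2 := sq_abs _)
    rw [hvar.2] at hmk
    refine le_trans hmk ?_
    rw [div_le_iff₀ (by positivity)]
    have hKδ : 8*M^2 ≤ (K:ℝ)*(δ*ε^2) := by
      rw [div_le_iff₀ (by positivity)] at hKb
      linarith
    have hh1 : (K:ℝ)*(8*M^2) ≤ (K:ℝ)*((K:ℝ)*(δ*ε^2)) :=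
      mul_le_mul_of_nonneg_left hKδ hKpos.le
    have hh2 : (K:ℝ)*Ec2 ≤ (K:ℝ)*M^2 := mul_le_mul_of_nonneg_left hEc2 hKpos.le
    rw [← hEc2def]
    have heq : δ/2 * ((K:ℝ)*ε/2)^2 = (K:ℝ)*((K:ℝ)*(δ*ε^2))/8 := by ring
    rw [heq]
    linarith
  -- Markov bound for B
  have hPB : ∑' x, B.indicator (AEP.qf p K) x ≤ δ/2 := by
    have hmk := AEP.markov (F := fun y : Fin K → ℕ => ∑ i, h (y i)) (hqst K).1 (AEP.qf_nonneg hp K)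
      (fun y => Finset.sum_nonneg fun i _ => hh0 _) hexp.1
      (t := (K:ℝ)*ε/4) (by positivity)
      (S := B) (fun x hx => hx)
    rw [hexp.2] at hmk
    refine le_trans hmk ?_
    rw [div_le_iff₀ (by positivity)]
    have hμh8 : μh ≤ ε*δ/8 := le_trans hμh_η (min_le_right _ _)
    rw [← hμhdef]
    have hh1 : (K:ℝ)*μh ≤ (K:ℝ)*(ε*δ/8) := mul_le_mul_of_nonneg_left hμh8 hKpos.le
    have heq : δ/2 * ((K:ℝ)*ε/4) = (K:ℝ)*(ε*δ/8) := by ring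
    rw [heq]
    exact hh1
  -- bad set pointwise bound
  have hμh_ε4 : μh ≤ ε/4 := le_trans hμh_η (min_le_left _ _)
  have hsplitpt : ∀ x : Fin K → ℕ,
      (typicalSet p H ε K)ᶜ.indicator (AEP.qf p K) x ≤
        A.indicator (AEP.qf p K) x + B.indicator (AEP.qf p K) x := by
    intro x
    have hA0 : 0 ≤ A.indicator (AEP.qf p K) x :=
      Set.indicator_nonneg (fun y _ => AEP.qf_nonneg hp K y) x
    have hB0 : 0 ≤ B.indicator (AEP.qf p K) x :=
      Set.indicator_nonneg (fun y _ => AEP.qf_nonneg hp K y) x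
    by_cases hxT : x ∈ (typicalSet p H ε K)ᶜ
    · rw [Set.indicator_of_mem hxT]
      rcases eq_or_lt_of_le (AEP.qf_nonneg hp K x) with hq0 | hqpos
      · rw [← hq0]; exact add_nonneg hA0 hB0
      · have hnot : ¬ |(∑ i, φ (x i)) - K * H| ≤ K * ε :=
          fun hcon => hxT ((hmem K x hqpos).mpr hcon)
        have hAB : x ∈ A ∨ x ∈ B := by
          by_contra hno
          push_neg at hno
          obtain ⟨hA, hB⟩ := hno
          rw [hAdef, Set.mem_setOf_eq, not_le] at hA
          rw [hBdef, Set.mem_setOf_eq, not_le] at hB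
          have h1 := abs_lt.mp hA
          have hsum_c : ∑ i, c (x i) = (∑ i, g (x i)) - K * μg := by
            have he : ∑ i : Fin K, c (x i) = ∑ i : Fin K, (g (x i) - μg) :=
              Finset.sum_congr rfl fun i _ => by rw [hcdef]
            rw [he, Finset.sum_sub_distrib, Finset.sum_const, Finset.card_univ,
              Fintype.card_fin, nsmul_eq_mul]
          have hφgh : (∑ i, φ (x i)) = (∑ i, g (x i)) + ∑ i, h (x i) := by
            rw [← Finset.sum_add_distrib]
            exact Finset.sum_congr rfl fun i _ => by
              rw [hhdef]
              ring
          have hSh0 : 0 ≤ ∑ i, h (x i) := Finset.sum_nonneg fun i _ => hh0 _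
          have hKH : (K:ℝ) * H = K * μg + K * μh := by rw [← hgh]; ring
          have hμhK : (K:ℝ) * μh ≤ K * (ε/4) :=
            mul_le_mul_of_nonneg_left hμh_ε4 hKpos.le
          have hμhK0 : 0 ≤ (K:ℝ) * μh := mul_nonneg hKpos.le hμh0
          apply hnot
          rw [abs_le]
          constructor <;> nlinarith [h1.1, h1.2, hB, hSh0, hμhK, hμhK0]
        rcases hAB with hh' | hh'
        · rw [Set.indicator_of_mem hh']
          linarith
        · rw [Set.indicator_of_mem hh']
          linarith
    · rw [Set.indicator_of_notMem hxT]
      exact add_nonneg hA0 hB0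
  have hbad : ∑' x, (typicalSet p H ε K)ᶜ.indicator (AEP.qf p K) x ≤ δ := by
    calc ∑' x, (typicalSet p H ε K)ᶜ.indicator (AEP.qf p K) x
        ≤ ∑' x, (A.indicator (AEP.qf p K) x + B.indicator (AEP.qf p K) x) :=
          hsTc.tsum_le_tsum hsplitpt (hsA.add hsB)
      _ = (∑' x, A.indicator (AEP.qf p K) x) + ∑' x, B.indicator (AEP.qf p K) x :=
          Summable.tsum_add hsA hsB
      _ ≤ δ/2 + δ/2 := add_le_add hPA hPB
      _ = δ := by ring
  have hsplit : (∑' x, (typicalSet p H ε K).indicator (AEP.qf p K) x)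
      + ∑' x, (typicalSet p H ε K)ᶜ.indicator (AEP.qf p K) x = 1 := by
    rw [← Summable.tsum_add hsT hsTc, ← (hqst K).2]
    exact tsum_congr fun x => Set.indicator_self_add_compl_apply _ _ _
  have hPT : 1 - δ ≤ ∑' x, (typicalSet p H ε K).indicator (AEP.qf p K) x := by
    linarith
  have hTs : ∑' x : typicalSet p H ε K, ∏ i : Fin K, p (x.1 i)
      = ∑' x, (typicalSet p H ε K).indicator (AEP.qf p K) x :=
    tsum_subtype (typicalSet p H ε K) (AEP.qf p K)
  constructor
  · rw [hTs]; exact hPT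
  · -- cardinality lower bound
    obtain ⟨hTfin, -⟩ := parta K
    have hcardeq : (Nat.card (typicalSet p H ε K) : ℝ) = (hTfin.toFinset.card : ℝ) := by
      rw [Nat.card_coe_set_eq, Set.ncard_eq_toFinset_card _ hTfin]
    have h1 : ∑' x, (typicalSet p H ε K).indicator (AEP.qf p K) x
        = ∑ x ∈ hTfin.toFinset, AEP.qf p K x := by
      rw [tsum_eq_sum (s := hTfin.toFinset) (fun x hx =>
        Set.indicator_of_notMem (fun hmem' => hx (hTfin.mem_toFinset.mpr hmem')) _)]
      exact Finset.sum_congr rfl fun x hx =>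
        Set.indicator_of_mem (hTfin.mem_toFinset.mp hx) _
    have h2 : ∑ x ∈ hTfin.toFinset, AEP.qf p K x
        ≤ (hTfin.toFinset.card : ℝ) * (2 : ℝ) ^ (-(K : ℝ) * (H - ε)) := by
      have hb := Finset.sum_le_card_nsmul hTfin.toFinset (AEP.qf p K)
        ((2 : ℝ) ^ (-(K : ℝ) * (H - ε)))
        (fun x hx => (hTfin.mem_toFinset.mp hx).2)
      rwa [nsmul_eq_mul] at hb
    have h3 : 1 - δ ≤ (hTfin.toFinset.card : ℝ) * (2 : ℝ) ^ (-(K : ℝ) * (H - ε)) := by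
      rw [h1] at hPT
      linarith
    have hbb : (2 : ℝ) ^ (-(K : ℝ) * (H - ε)) * (2 : ℝ) ^ ((K : ℝ) * (H - ε)) = 1 := by
      rw [← Real.rpow_add two_pos]
      norm_num
    have h2pos : (0:ℝ) < (2 : ℝ) ^ ((K : ℝ) * (H - ε)) := Real.rpow_pos_of_pos two_pos _
    rw [hcardeq]
    calc (1 - δ) * (2 : ℝ) ^ ((K : ℝ) * (H - ε))
        ≤ ((hTfin.toFinset.card : ℝ) * (2 : ℝ) ^ (-(K : ℝ) * (H - ε)))
            * (2 : ℝ) ^ ((K : ℝ) * (H - ε)) :=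
          mul_le_mul_of_nonneg_right h3 h2pos.le
      _ = (hTfin.toFinset.card : ℝ)
            * ((2 : ℝ) ^ (-(K : ℝ) * (H - ε)) * (2 : ℝ) ^ ((K : ℝ) * (H - ε))) := by ring
      _ = (hTfin.toFinset.card : ℝ) := by rw [hbb, mul_one]

end
end

section
/- Let r > 0 and define p : ℕ → ℝ by p n = tanh(r)^(2n) / cosh(r)^2. Then ∑' n, p n = 1 and −∑' n, p n · log₂ (p n) = cosh(r)^2 · log₂ (cosh(r)^2) − sinh(r)^2 · log₂ (sinh(r)^2). -/
noncomputable section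

/-- The Schmidt distribution `p n = tanh(r)^(2n) / cosh(r)²` of the two-mode
squeezed vacuum is normalized and its Shannon entropy equals the entanglement
entropy `E(r) = cosh²(r) log₂ cosh²(r) − sinh²(r) log₂ sinh²(r)`. -/
theorem tmsv_entropy (r : ℝ) (hr : 0 < r) :
    (∑' n : ℕ, Real.tanh r ^ (2 * n) / Real.cosh r ^ 2) = 1 ∧
    -(∑' n : ℕ, (Real.tanh r ^ (2 * n) / Real.cosh r ^ 2) *
        Real.logb 2 (Real.tanh r ^ (2 * n) / Real.cosh r ^ 2))
      = Real.cosh r ^ 2 * Real.logb 2 (Real.cosh r ^ 2)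
        - Real.sinh r ^ 2 * Real.logb 2 (Real.sinh r ^ 2) := by
  have hc : 0 < Real.cosh r := Real.cosh_pos r
  have hs : 0 < Real.sinh r := by
    rw [Real.sinh_eq]; have := Real.exp_lt_exp.mpr (neg_lt_self hr); linarith
  have hsc : Real.sinh r < Real.cosh r := by
    rw [Real.sinh_eq, Real.cosh_eq]
    have := Real.exp_pos (-r); linarith
  set q := Real.tanh r ^ 2 with hqdef
  have hqeq : q = Real.sinh r ^ 2 / Real.cosh r ^ 2 := by
    rw [hqdef, Real.tanh_eq_sinh_div_cosh, div_pow]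
  have hq0 : 0 < q := by rw [hqeq]; positivity
  have hq1 : q < 1 := by
    rw [hqeq, div_lt_one (by positivity)]; nlinarith
  have hC : 0 < Real.cosh r ^ 2 := by positivity
  have hS : 0 < Real.sinh r ^ 2 := by positivity
  have hsub : 1 - q = 1 / Real.cosh r ^ 2 := by
    rw [hqeq]
    have h := Real.cosh_sq_sub_sinh_sq r
    field_simp; linarith
  have hpow : ∀ n : ℕ, Real.tanh r ^ (2 * n) = q ^ n := by
    intro n; rw [pow_mul, hqdef]
  have hgeo : (∑' n : ℕ, q ^ n) = (1 - q)⁻¹ :=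
    tsum_geometric_of_lt_one hq0.le hq1
  have hinv : (1 - q)⁻¹ = Real.cosh r ^ 2 := by
    rw [hsub, one_div, inv_inv]
  have hsum1 : (∑' n : ℕ, Real.tanh r ^ (2 * n) / Real.cosh r ^ 2) = 1 := by
    simp_rw [hpow, div_eq_mul_inv]
    rw [tsum_mul_right, hgeo, hinv]
    field_simp
  refine ⟨hsum1, ?_⟩
  have hqnorm : ‖q‖ < 1 := by rw [Real.norm_eq_abs, abs_of_pos hq0]; exact hq1
  have hsumm1 : Summable (fun n : ℕ => (n : ℝ) * q ^ n) := by
    simpa using summable_pow_mul_geometric_of_norm_lt_one 1 hqnorm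
  have hsumm2 : Summable (fun n : ℕ => q ^ n) := summable_geometric_of_lt_one hq0.le hq1
  have hterm : ∀ n : ℕ,
      (Real.tanh r ^ (2 * n) / Real.cosh r ^ 2) *
        Real.logb 2 (Real.tanh r ^ (2 * n) / Real.cosh r ^ 2)
      = (Real.logb 2 q / Real.cosh r ^ 2) * ((n : ℝ) * q ^ n)
        - (Real.logb 2 (Real.cosh r ^ 2) / Real.cosh r ^ 2) * q ^ n := by
    intro n
    rw [hpow, Real.logb_div (pow_ne_zero _ hq0.ne') hC.ne', Real.logb_pow]
    ring
  rw [tsum_congr hterm, Summable.tsum_sub (hsumm1.mul_left _) (hsumm2.mul_left _),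
    tsum_mul_left, tsum_mul_left, hgeo, hinv,
    tsum_coe_mul_geometric_of_norm_lt_one hqnorm]
  have hlogq : Real.logb 2 q = Real.logb 2 (Real.sinh r ^ 2) - Real.logb 2 (Real.cosh r ^ 2) := by
    rw [hqeq, Real.logb_div hS.ne' hC.ne']
  have h1 : q / (1 - q) ^ 2 = Real.sinh r ^ 2 * Real.cosh r ^ 2 := by
    rw [hsub, hqeq]; field_simp
  have hCS : Real.cosh r ^ 2 = Real.sinh r ^ 2 + 1 := Real.cosh_sq r
  rw [hlogq, h1]
  have h2 : (Real.logb 2 (Real.sinh r ^ 2) - Real.logb 2 (Real.cosh r ^ 2)) / Real.cosh r ^ 2 *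
      (Real.sinh r ^ 2 * Real.cosh r ^ 2)
      = (Real.logb 2 (Real.sinh r ^ 2) - Real.logb 2 (Real.cosh r ^ 2)) * Real.sinh r ^ 2 := by
    field_simp
  have h3 : Real.logb 2 (Real.cosh r ^ 2) / Real.cosh r ^ 2 * Real.cosh r ^ 2
      = Real.logb 2 (Real.cosh r ^ 2) := div_mul_cancel₀ _ hC.ne'
  rw [h2, h3, hCS]
  ring
end
end
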